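/- arXiv:2112.13339 — 9 statements merged into one kernel-verified Lean document; each statement's English description precedes it below -/
import Mathlib

section
/- Let d ≥ 1, R > 0, and let μ be a Borel probability measure on ℝ^d whose support is contained in the closed ball of radius R centered at the origin. Fix ν ∈ (0,1) and set a = √(1−ν). For x ∈ ℝ^d define the Gaussian weight G(y) = exp(−‖x − a·y‖²/(2ν)) and the integrated score s(x) = (∫ −((x − a·y)/ν)·G(y) dμ(y)) / (∫ G(y) dμ(y)) (the denominator is strictly positive since G > 0 and μ is a probability measure). Then for every point x₀ in the support of μ and every x ∈ ℝ^d, ‖s(x) − (−(x − a·x₀)/ν)‖ ≤ 2R·√(1−ν)/ν. -/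
open MeasureTheory Metric

/-- The (topological) support of a measure: the set of points all of whose
neighborhoods have nonzero measure. -/
def measureSupport {E : Type*} [TopologicalSpace E] [MeasurableSpace E]
    (μ : Measure E) : Set E :=
  {x | ∀ U ∈ nhds x, μ U ≠ 0}

lemma compl_measureSupport_null {E : Type*} [TopologicalSpace E] [MeasurableSpace E]
    [SecondCountableTopology E] (μ : Measure E) :
    μ (measureSupport μ)ᶜ = 0 := by
  set S : Set (Set E) := {V | IsOpen V ∧ μ V = 0} with hS
  have hsub : (measureSupport μ)ᶜ ⊆ ⋃₀ S := by
    intro z hz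
    simp only [measureSupport, Set.mem_compl_iff, Set.mem_setOf_eq, not_forall] at hz
    obtain ⟨U, hU, hUz⟩ := hz
    rw [not_not] at hUz
    exact ⟨interior U, ⟨isOpen_interior, measure_mono_null interior_subset hUz⟩,
      mem_interior_iff_mem_nhds.2 hU⟩
  obtain ⟨T, hTc, hTS, hTU⟩ := TopologicalSpace.isOpen_sUnion_countable S (fun s hs => hs.1)
  have h0 : μ (⋃₀ T) = 0 := (measure_sUnion_null_iff hTc).2 (fun s hs => (hTS hs).2)
  exact measure_mono_null (hTU ▸ hsub) h0

theorem single_point_score_bound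
    (d : ℕ) (hd : 1 ≤ d) (R : ℝ) (hR : 0 < R)
    (μ : Measure (EuclideanSpace ℝ (Fin d))) [IsProbabilityMeasure μ]
    (hsupp : measureSupport μ ⊆ closedBall (0 : EuclideanSpace ℝ (Fin d)) R)
    (ν : ℝ) (hν : ν ∈ Set.Ioo (0 : ℝ) 1)
    (x₀ : EuclideanSpace ℝ (Fin d)) (hx₀ : x₀ ∈ measureSupport μ)
    (x : EuclideanSpace ℝ (Fin d))
    (a : ℝ) (ha : a = Real.sqrt (1 - ν))
    (G : EuclideanSpace ℝ (Fin d) → ℝ)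
    (hG : G = fun y => Real.exp (-‖x - a • y‖ ^ 2 / (2 * ν)))
    (s : EuclideanSpace ℝ (Fin d))
    (hs : s = (∫ y, G y ∂μ)⁻¹ • ∫ y, G y • (-(ν⁻¹ • (x - a • y))) ∂μ) :
    ‖s - (-(ν⁻¹ • (x - a • x₀)))‖ ≤ 2 * R * Real.sqrt (1 - ν) / ν := by
  obtain ⟨hν0, hν1⟩ := hν
  have ha0 : 0 ≤ a := ha ▸ Real.sqrt_nonneg _
  set c : EuclideanSpace ℝ (Fin d) → EuclideanSpace ℝ (Fin d) :=
    fun y => -(ν⁻¹ • (x - a • y)) with hc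
  -- basic facts about G
  have hGpos : ∀ y, 0 < G y := by intro y; rw [hG]; exact Real.exp_pos _
  have hGle : ∀ y, G y ≤ 1 := by
    intro y; rw [hG]
    exact Real.exp_le_one_iff.2 (div_nonpos_iff.2 (Or.inr ⟨neg_nonpos.2 (by positivity), by linarith⟩))
  have hGcont : Continuous G := by
    rw [hG]; fun_prop
  have hccont : Continuous c := by
    rw [hc]; fun_prop
  have hGint : Integrable G μ := by
    refine (integrable_const (1 : ℝ)).mono' hGcont.aestronglyMeasurable ?_
    filter_upwards with y
    rw [Real.norm_eq_abs, abs_of_pos (hGpos y)]; exact hGle y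
  have hIpos : 0 < ∫ y, G y ∂μ := by
    rw [integral_pos_iff_support_of_nonneg_ae (Filter.Eventually.of_forall fun y => (hGpos y).le)
      hGint]
    have : Function.support G = Set.univ := by
      ext y; simp [Function.mem_support, (hGpos y).ne']
    rw [this]
    simp
  -- a.e. bound on points
  have hae : ∀ᵐ y ∂μ, y ∈ closedBall (0 : EuclideanSpace ℝ (Fin d)) R := by
    have h0 : μ (measureSupport μ)ᶜ = 0 := compl_measureSupport_null μ
    refine measure_mono_null ?_ h0
    intro y hy
    simp only [Set.mem_compl_iff, Set.mem_setOf_eq] at hy ⊢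
    exact fun hmem => hy (hsupp hmem)
  have hx₀R : ‖x₀‖ ≤ R := by
    have := hsupp hx₀
    rwa [mem_closedBall, dist_zero_right] at this
  -- difference of conditional scores
  have hcdiff : ∀ y, c y - c x₀ = (a / ν) • (y - x₀) := by
    intro y
    rw [hc]
    simp only [div_eq_mul_inv]
    module
  have hcbound : ∀ᵐ y ∂μ, ‖c y - c x₀‖ ≤ a / ν * (2 * R) := by
    filter_upwards [hae] with y hy
    rw [mem_closedBall, dist_zero_right] at hy
    rw [hcdiff y, norm_smul, Real.norm_eq_abs, abs_of_nonneg (by positivity)]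
    have : ‖y - x₀‖ ≤ 2 * R := by
      calc ‖y - x₀‖ ≤ ‖y‖ + ‖x₀‖ := norm_sub_le _ _
        _ ≤ 2 * R := by linarith
    exact mul_le_mul_of_nonneg_left this (by positivity)
  -- integrability of the main integrands
  have hfmeas : AEStronglyMeasurable (fun y => G y • (c y - c x₀)) μ :=
    (hGcont.smul (hccont.sub continuous_const)).aestronglyMeasurable
  have hfbound : ∀ᵐ y ∂μ, ‖G y • (c y - c x₀)‖ ≤ 2 * R * a / ν * G y := by
    filter_upwards [hcbound] with y hy
    rw [norm_smul, Real.norm_eq_abs, abs_of_pos (hGpos y)]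
    calc G y * ‖c y - c x₀‖ ≤ G y * (a / ν * (2 * R)) :=
          mul_le_mul_of_nonneg_left hy (hGpos y).le
      _ = 2 * R * a / ν * G y := by ring
  have hfint : Integrable (fun y => G y • (c y - c x₀)) μ :=
    (hGint.const_mul _).mono' hfmeas hfbound
  have hgint : Integrable (fun y => G y • c x₀) μ := hGint.smul_const _
  have hGcint : Integrable (fun y => G y • c y) μ := by
    have : (fun y => G y • c y) = fun y => G y • (c y - c x₀) + G y • c x₀ := by
      funext y; rw [← smul_add, sub_add_cancel]
    rw [this]
    exact hfint.add hgint
  -- key identity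
  have hne : (∫ y, G y ∂μ) ≠ 0 := hIpos.ne'
  have key : s - c x₀ = (∫ y, G y ∂μ)⁻¹ • ∫ y, G y • (c y - c x₀) ∂μ := by
    have h1 : ∫ y, G y • (c y - c x₀) ∂μ
        = (∫ y, G y • c y ∂μ) - (∫ y, G y ∂μ) • c x₀ := by
      simp only [smul_sub]
      rw [integral_sub hGcint hgint, integral_smul_const]
    rw [h1, smul_sub, smul_smul, inv_mul_cancel₀ hne, one_smul, hs, hc]
  -- final estimate
  have hnorm : ‖∫ y, G y • (c y - c x₀) ∂μ‖ ≤ 2 * R * a / ν * ∫ y, G y ∂μ := by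
    calc ‖∫ y, G y • (c y - c x₀) ∂μ‖ ≤ ∫ y, ‖G y • (c y - c x₀)‖ ∂μ :=
          norm_integral_le_integral_norm _
      _ ≤ ∫ y, 2 * R * a / ν * G y ∂μ := by
          refine integral_mono_of_nonneg (Filter.Eventually.of_forall fun y => norm_nonneg _)
            (hGint.const_mul _) hfbound
      _ = 2 * R * a / ν * ∫ y, G y ∂μ := integral_const_mul _ _
  have : ‖s - c x₀‖ ≤ 2 * R * a / ν := by
    rw [key, norm_smul, Real.norm_eq_abs, abs_of_pos (inv_pos.2 hIpos)]
    calc (∫ y, G y ∂μ)⁻¹ * ‖∫ y, G y • (c y - c x₀) ∂μ‖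
        ≤ (∫ y, G y ∂μ)⁻¹ * (2 * R * a / ν * ∫ y, G y ∂μ) :=
          mul_le_mul_of_nonneg_left hnorm (inv_pos.2 hIpos).le
      _ = 2 * R * a / ν := by field_simp
  rw [ha] at this
  simpa [hc] using this
end

section
/- Let x and y be vectors in a real inner product space, and let r ∈ [0,1]. If ‖x − y‖ ≤ r·‖x‖, then ⟪x, y⟫ ≥ (1 − (1/2)·(1 + r)·r²)·‖x‖·‖y‖; in particular, when x and y are nonzero, the cosine similarity ⟪x, y⟫/(‖x‖·‖y‖) is at least 1 − (1/2)·(1 + r)·r². -/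
open scoped RealInnerProductSpace

theorem cosine_similarity_lower_bound
    {E : Type*} [NormedAddCommGroup E] [InnerProductSpace ℝ E]
    (x y : E) (r : ℝ) (hr : r ∈ Set.Icc (0 : ℝ) 1)
    (h : ‖x - y‖ ≤ r * ‖x‖) :
    (1 - (1 / 2) * (1 + r) * r ^ 2) * (‖x‖ * ‖y‖) ≤ ⟪x, y⟫ ∧
      (x ≠ 0 → y ≠ 0 →
        1 - (1 / 2) * (1 + r) * r ^ 2 ≤ ⟪x, y⟫ / (‖x‖ * ‖y‖)) := by
  obtain ⟨hr0, hr1⟩ := hr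
  have hx : (0:ℝ) ≤ ‖x‖ := norm_nonneg x
  have hy : (0:ℝ) ≤ ‖y‖ := norm_nonneg y
  have hd : (0:ℝ) ≤ ‖x - y‖ := norm_nonneg _
  have hsq : ‖x - y‖ ^ 2 = ‖x‖ ^ 2 - 2 * ⟪x, y⟫ + ‖y‖ ^ 2 := norm_sub_sq_real x y
  have hd2 : ‖x - y‖ ^ 2 ≤ r ^ 2 * ‖x‖ ^ 2 := by nlinarith
  have main : (1 - (1 / 2) * (1 + r) * r ^ 2) * (‖x‖ * ‖y‖) ≤ ⟪x, y⟫ := by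
    nlinarith [sq_nonneg (‖y‖ - (1 - (1 + r) * r ^ 2 / 2) * ‖x‖),
      mul_nonneg (mul_nonneg (sq_nonneg ‖x‖) (pow_nonneg hr0 3)) (by nlinarith : (0:ℝ) ≤ 4 - r * (1 + r) ^ 2),
      sq_nonneg ‖x‖, sq_nonneg r]
  refine ⟨main, fun hx0 hy0 => ?_⟩
  have hxp : (0:ℝ) < ‖x‖ := norm_pos_iff.mpr hx0
  have hyp : (0:ℝ) < ‖y‖ := norm_pos_iff.mpr hy0
  rw [le_div_iff₀ (by positivity)]
  exact main
end

section
/- Let I ⊆ ℝ be an open interval, β : ℝ → ℝ twice differentiable on I, and ν : ℝ → ℝ differentiable on I with 0 < ν(t) < 1 and ν'(t) = (1 − ν(t))·β(t) for t ∈ I. Fix x₀ ∈ ℝ and define the single-point score S(x,t) = (x − √(1 − ν(t))·x₀)/√(ν(t)), the probability-flow drift f♭(x,t) = −(β(t)/2)·x + (β(t)/(2√(ν(t))))·S(x,t), and the operator (L♭ φ)(x,t) = −∂φ/∂t (x,t) − f♭(x,t)·∂φ/∂x (x,t). Then for all x ∈ ℝ and t ∈ I, (L♭(L♭(−f♭)))(x,t)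 = ( β(t)³/8 − 3β(t)β'(t)/4 + β''(t)/2 )·x + ( β(t)³·(−ν(t)² + 3ν(t) − 3)/(8·ν(t)^{5/2}) + 3β(t)β'(t)/(4·ν(t)^{3/2}) − β''(t)/(2√(ν(t))) )·S(x,t). -/
open Real

set_option maxHeartbeats 2000000 in
theorem ideal_derivative_L_flat_sq_of_drift
    (I : Set ℝ) (hI : IsOpen I)
    (β ν : ℝ → ℝ)
    (hβ : ∀ t ∈ I, DifferentiableAt ℝ β t)
    (hβ' : ∀ t ∈ I, DifferentiableAt ℝ (deriv β) t)
    (hν01 : ∀ t ∈ I, 0 < ν t ∧ ν t < 1)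
    (hν : ∀ t ∈ I, HasDerivAt ν ((1 - ν t) * β t) t)
    (x₀ : ℝ)
    (S : ℝ → ℝ → ℝ)
    (hS : S = fun x t => (x - Real.sqrt (1 - ν t) * x₀) / Real.sqrt (ν t))
    (f : ℝ → ℝ → ℝ)
    (hf : f = fun x t => -(β t / 2) * x + (β t / (2 * Real.sqrt (ν t))) * S x t)
    (L : (ℝ → ℝ → ℝ) → ℝ → ℝ → ℝ)
    (hL : L = fun φ x t =>
      -(deriv (fun τ => φ x τ) t) - f x t * deriv (fun ξ => φ ξ t) x) :
    ∀ x : ℝ, ∀ t ∈ I,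
      L (L (fun x t => -f x t)) x t
        = (β t ^ 3 / 8 - 3 * β t * deriv β t / 4 + deriv (deriv β) t / 2) * x
          + (β t ^ 3 * (-(ν t ^ 2) + 3 * ν t - 3) / (8 * ν t ^ ((5 : ℝ) / 2))
              + 3 * β t * deriv β t / (4 * ν t ^ ((3 : ℝ) / 2))
              - deriv (deriv β) t / (2 * Real.sqrt (ν t))) * S x t := by
  -- closed form of f
  have hfc : ∀ y : ℝ, ∀ τ ∈ I, f y τ =
      (β τ * (1 - ν τ) / (2 * ν τ)) * y + (-x₀ * β τ * Real.sqrt (1 - ν τ) / (2 * ν τ)) := by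
    intro y τ hτ
    obtain ⟨h0, h1⟩ := hν01 τ hτ
    have hs0 : Real.sqrt (ν τ) ≠ 0 := ne_of_gt (Real.sqrt_pos.mpr h0)
    have hsq : Real.sqrt (ν τ) ^ 2 = ν τ := Real.sq_sqrt h0.le
    have hn0 : ν τ ≠ 0 := ne_of_gt h0
    rw [hf, hS]
    set r1 := Real.sqrt (1 - ν τ) with hr1d
    set sq := Real.sqrt (ν τ) with hsqd
    rw [← hsq]
    field_simp
    ring
  -- derivatives of p and q on I
  have hpq : ∀ τ ∈ I,
      HasDerivAt (fun σ => β σ * (1 - ν σ) / (2 * ν σ))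
        ((1 - ν τ) * ((deriv β τ - β τ ^ 2) * ν τ - β τ ^ 2 * (1 - ν τ)) / (2 * ν τ ^ 2)) τ ∧
      HasDerivAt (fun σ => -x₀ * β σ * Real.sqrt (1 - ν σ) / (2 * ν σ))
        (x₀ * Real.sqrt (1 - ν τ) * (β τ ^ 2 * (1 - ν τ) - (deriv β τ - β τ ^ 2 / 2) * ν τ)
          / (2 * ν τ ^ 2)) τ := by
    intro τ hτ
    obtain ⟨h0, h1⟩ := hν01 τ hτ
    have hn0 : ν τ ≠ 0 := ne_of_gt h0
    have h1n0 : (1 : ℝ) - ν τ ≠ 0 := by linarith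
    have hr0 : Real.sqrt (1 - ν τ) ≠ 0 := ne_of_gt (Real.sqrt_pos.mpr (by linarith))
    have hr2 : Real.sqrt (1 - ν τ) ^ 2 = 1 - ν τ := Real.sq_sqrt (by linarith)
    have hb := (hβ τ hτ).hasDerivAt
    have hn := hν τ hτ
    have h1n : HasDerivAt (fun σ => 1 - ν σ) (-((1 - ν τ) * β τ)) τ := hn.const_sub 1
    have hden : HasDerivAt (fun σ => 2 * ν σ) (2 * ((1 - ν τ) * β τ)) τ := hn.const_mul 2
    have hden0 : 2 * ν τ ≠ 0 := by positivity
    have hr : HasDerivAt (fun σ => Real.sqrt (1 - ν σ)) (-(β τ * Real.sqrt (1 - ν τ)) / 2) τ := by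
      have := h1n.sqrt h1n0
      convert this using 1
      set rr := Real.sqrt (1 - ν τ) with hrrd
      rw [← hr2]
      field_simp
    constructor
    · have := (hb.mul h1n).div hden hden0
      refine this.congr_deriv ?_
      simp only [Pi.mul_apply]
      field_simp
      ring
    · have := ((hb.const_mul (-x₀)).mul hr).div hden hden0
      refine this.congr_deriv ?_
      simp only [Pi.mul_apply]
      field_simp
      ring
  -- closed form of L (−f) on I
  have hLf : ∀ y : ℝ, ∀ τ ∈ I,
      L (fun x t => -f x t) y τ =
        ((1 - ν τ) * ((deriv β τ - β τ ^ 2) * ν τ - β τ ^ 2 * (1 - ν τ)) / (2 * ν τ ^ 2)) * y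
        + (x₀ * Real.sqrt (1 - ν τ) * (β τ ^ 2 * (1 - ν τ) - (deriv β τ - β τ ^ 2 / 2) * ν τ)
            / (2 * ν τ ^ 2))
        + ((β τ * (1 - ν τ) / (2 * ν τ)) * y + (-x₀ * β τ * Real.sqrt (1 - ν τ) / (2 * ν τ)))
            * (β τ * (1 - ν τ) / (2 * ν τ)) := by
    intro y τ hτ
    obtain ⟨hp, hq⟩ := hpq τ hτ
    rw [hL]
    have e1 : deriv (fun σ => -f y σ) τ =
        -(((1 - ν τ) * ((deriv β τ - β τ ^ 2) * ν τ - β τ ^ 2 * (1 - ν τ)) / (2 * ν τ ^ 2)) * y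
          + (x₀ * Real.sqrt (1 - ν τ) * (β τ ^ 2 * (1 - ν τ) - (deriv β τ - β τ ^ 2 / 2) * ν τ)
            / (2 * ν τ ^ 2))) := by
      have hev : (fun σ => -f y σ) =ᶠ[nhds τ]
          (fun σ => -((β σ * (1 - ν σ) / (2 * ν σ)) * y
            + (-x₀ * β σ * Real.sqrt (1 - ν σ) / (2 * ν σ)))) := by
        filter_upwards [hI.mem_nhds hτ] with σ hσ
        rw [hfc y σ hσ]
      rw [hev.deriv_eq]
      exact (((hp.mul_const y).add hq).neg).deriv
    have e2 : deriv (fun ξ => -f ξ τ) y = -(β τ * (1 - ν τ) / (2 * ν τ)) := by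
      have hfun : (fun ξ => -f ξ τ) = fun ξ =>
          -((β τ * (1 - ν τ) / (2 * ν τ)) * ξ + (-x₀ * β τ * Real.sqrt (1 - ν τ) / (2 * ν τ))) := by
        funext ξ; rw [hfc ξ τ hτ]
      rw [hfun]
      have : HasDerivAt (fun ξ : ℝ =>
          -((β τ * (1 - ν τ) / (2 * ν τ)) * ξ + (-x₀ * β τ * Real.sqrt (1 - ν τ) / (2 * ν τ))))
          (-(β τ * (1 - ν τ) / (2 * ν τ))) y := by
        have h := (((hasDerivAt_id y).const_mul (β τ * (1 - ν τ) / (2 * ν τ))).add_const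
          (-x₀ * β τ * Real.sqrt (1 - ν τ) / (2 * ν τ))).neg
        exact h.congr_deriv (by ring)
      exact this.deriv
    simp only [e1, e2]
    rw [hfc y τ hτ]
    ring
  intro x t ht
  obtain ⟨h0, h1⟩ := hν01 t ht
  have hn0 : ν t ≠ 0 := ne_of_gt h0
  have h1n0 : (1 : ℝ) - ν t ≠ 0 := by linarith
  have hs0 : Real.sqrt (ν t) ≠ 0 := ne_of_gt (Real.sqrt_pos.mpr h0)
  have hsq : Real.sqrt (ν t) ^ 2 = ν t := Real.sq_sqrt h0.le
  have hr2 : Real.sqrt (1 - ν t) ^ 2 = 1 - ν t := Real.sq_sqrt (by linarith)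
  obtain ⟨hp, hq⟩ := hpq t ht
  have hb := (hβ t ht).hasDerivAt
  have hb1 := (hβ' t ht).hasDerivAt
  have hn := hν t ht
  have h1n : HasDerivAt (fun σ => 1 - ν σ) (-((1 - ν t) * β t)) t := hn.const_sub 1
  have hbb := hb.pow 2
  have hden2 : HasDerivAt (fun σ => 2 * ν σ ^ 2) (2 * (2 * ν t ^ (2 - 1) * ((1 - ν t) * β t))) t :=
    (hn.pow 2).const_mul 2
  have hden20 : 2 * ν t ^ 2 ≠ 0 := by positivity
  have hr : HasDerivAt (fun σ => Real.sqrt (1 - ν σ)) (-(β t * Real.sqrt (1 - ν t)) / 2) t := by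
    have := h1n.sqrt h1n0
    convert this using 1
    have hr0 : Real.sqrt (1 - ν t) ≠ 0 := ne_of_gt (Real.sqrt_pos.mpr (by linarith))
    set rr := Real.sqrt (1 - ν t) with hrrd
    rw [← hr2]
    field_simp
  have hpd := (h1n.mul (((hb1.sub hbb).mul hn).sub (hbb.mul h1n))).div hden2 hden20
  have hqd := ((hr.const_mul x₀).mul ((hbb.mul h1n).sub
      ((hb1.sub (hbb.div_const 2)).mul hn))).div hden2 hden20
  have hG := ((hpd.mul_const x).add hqd).add (((hp.mul_const x).add hq).mul hp)
  have hev : (fun τ => L (fun x t => -f x t) x τ) =ᶠ[nhds t]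
        (fun τ => ((1 - ν τ) * ((deriv β τ - β τ ^ 2) * ν τ - β τ ^ 2 * (1 - ν τ)) / (2 * ν τ ^ 2)) * x
        + (x₀ * Real.sqrt (1 - ν τ) * (β τ ^ 2 * (1 - ν τ) - (deriv β τ - β τ ^ 2 / 2) * ν τ)
            / (2 * ν τ ^ 2))
        + ((β τ * (1 - ν τ) / (2 * ν τ)) * x + (-x₀ * β τ * Real.sqrt (1 - ν τ) / (2 * ν τ)))
            * (β τ * (1 - ν τ) / (2 * ν τ))) := by
    filter_upwards [hI.mem_nhds ht] with τ hτ
    exact hLf x τ hτ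
  have E1 := hev.deriv_eq.trans hG.deriv
  have E2 : deriv (fun ξ => L (fun x t => -f x t) ξ t) x =
      ((1 - ν t) * ((deriv β t - β t ^ 2) * ν t - β t ^ 2 * (1 - ν t)) / (2 * ν t ^ 2))
        + (β t * (1 - ν t) / (2 * ν t)) * (β t * (1 - ν t) / (2 * ν t)) := by
    have hfun : (fun ξ => L (fun x t => -f x t) ξ t) = fun ξ =>
        ((1 - ν t) * ((deriv β t - β t ^ 2) * ν t - β t ^ 2 * (1 - ν t)) / (2 * ν t ^ 2)) * ξ
        + (x₀ * Real.sqrt (1 - ν t) * (β t ^ 2 * (1 - ν t) - (deriv β t - β t ^ 2 / 2) * ν t)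
            / (2 * ν t ^ 2))
        + ((β t * (1 - ν t) / (2 * ν t)) * ξ + (-x₀ * β t * Real.sqrt (1 - ν t) / (2 * ν t)))
            * (β t * (1 - ν t) / (2 * ν t)) := by
      funext ξ; exact hLf ξ t ht
    rw [hfun]
    have hA : HasDerivAt (fun ξ : ℝ =>
        ((1 - ν t) * ((deriv β t - β t ^ 2) * ν t - β t ^ 2 * (1 - ν t)) / (2 * ν t ^ 2)) * ξ
          + (x₀ * Real.sqrt (1 - ν t) * (β t ^ 2 * (1 - ν t) - (deriv β t - β t ^ 2 / 2) * ν t)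
            / (2 * ν t ^ 2)))
        ((1 - ν t) * ((deriv β t - β t ^ 2) * ν t - β t ^ 2 * (1 - ν t)) / (2 * ν t ^ 2)) x := by
      simpa using ((hasDerivAt_id x).const_mul
        ((1 - ν t) * ((deriv β t - β t ^ 2) * ν t - β t ^ 2 * (1 - ν t)) / (2 * ν t ^ 2))).add_const
        (x₀ * Real.sqrt (1 - ν t) * (β t ^ 2 * (1 - ν t) - (deriv β t - β t ^ 2 / 2) * ν t)
            / (2 * ν t ^ 2))
    have hC : HasDerivAt (fun ξ : ℝ =>
        (β t * (1 - ν t) / (2 * ν t)) * ξ + (-x₀ * β t * Real.sqrt (1 - ν t) / (2 * ν t)))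
        (β t * (1 - ν t) / (2 * ν t)) x := by
      simpa using ((hasDerivAt_id x).const_mul (β t * (1 - ν t) / (2 * ν t))).add_const
        (-x₀ * β t * Real.sqrt (1 - ν t) / (2 * ν t))
    exact (hA.add (hC.mul_const (β t * (1 - ν t) / (2 * ν t)))).deriv
  have hmain : L (L (fun x t => -f x t)) x t
      = -(deriv (fun τ => L (fun x t => -f x t) x τ) t)
        - f x t * deriv (fun ξ => L (fun x t => -f x t) ξ t) x := by
    rw [hL]
  rw [hmain, E1, E2, hfc x t ht, hS]
  simp only [Pi.add_apply, Pi.sub_apply, Pi.mul_apply, Pi.pow_apply, Pi.div_apply, Pi.neg_apply]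
  have h52 : ν t ^ ((5 : ℝ) / 2) = ν t ^ 2 * Real.sqrt (ν t) := by
    rw [show (5 : ℝ) / 2 = (2 : ℕ) + (1 : ℝ) / 2 by norm_num, Real.rpow_add h0,
      Real.rpow_natCast, ← Real.sqrt_eq_rpow]
  have h32 : ν t ^ ((3 : ℝ) / 2) = ν t * Real.sqrt (ν t) := by
    rw [show (3 : ℝ) / 2 = (1 : ℕ) + (1 : ℝ) / 2 by norm_num, Real.rpow_add h0,
      Real.rpow_natCast, ← Real.sqrt_eq_rpow, pow_one]
  rw [h52, h32]
  set r := Real.sqrt (1 - ν t) with hrdef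
  set s := Real.sqrt (ν t) with hsdef
  rw [← hsq]
  field_simp
  ring
end

section
/- Let I ⊆ ℝ be an open interval, β : ℝ → ℝ differentiable on I, and ν : ℝ → ℝ differentiable on I with 0 < ν(t) < 1 and ν'(t) = (1 − ν(t))·β(t) for t ∈ I. Fix x₀ ∈ ℝ and define the single-point score S(x,t) = (x − √(1 − ν(t))·x₀)/√(ν(t)), the reverse-SDE drift f♯(x,t) = −(β(t)/2)·x + (β(t)/√(ν(t)))·S(x,t), and the operator (L♯ φ)(x,t) = −∂φ/∂t (x,t) − f♯(x,t)·∂φ/∂x (x,t) + (β(t)/2)·∂²φ/∂x² (x,t). Then for all x ∈ ℝ and t ∈ I, (L♯(−f♯))(x,t) = ( β(t)²/4 − β'(t)/2 )·x + ( β'(t)/√(ν(t)) )·S(x,t). -/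
open Real

theorem ideal_derivative_L_sharp_of_drift
    (I : Set ℝ) (hI : IsOpen I)
    (β ν : ℝ → ℝ)
    (hβ : ∀ t ∈ I, DifferentiableAt ℝ β t)
    (hν01 : ∀ t ∈ I, 0 < ν t ∧ ν t < 1)
    (hν : ∀ t ∈ I, HasDerivAt ν ((1 - ν t) * β t) t)
    (x₀ : ℝ)
    (S : ℝ → ℝ → ℝ)
    (hS : S = fun x t => (x - Real.sqrt (1 - ν t) * x₀) / Real.sqrt (ν t))
    (f : ℝ → ℝ → ℝ)
    (hf : f = fun x t => -(β t / 2) * x + (β t / Real.sqrt (ν t)) * S x t)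
    (L : (ℝ → ℝ → ℝ) → ℝ → ℝ → ℝ)
    (hL : L = fun φ x t =>
      -(deriv (fun τ => φ x τ) t) - f x t * deriv (fun ξ => φ ξ t) x
        + (β t / 2) * deriv (deriv (fun ξ => φ ξ t)) x) :
    ∀ x : ℝ, ∀ t ∈ I,
      L (fun x t => -f x t) x t
        = (β t ^ 2 / 4 - deriv β t / 2) * x
          + (deriv β t / Real.sqrt (ν t)) * S x t := by
  subst hS hf hL
  intro x t ht
  obtain ⟨hν0, hν1⟩ := hν01 t ht
  have hs : (0:ℝ) < Real.sqrt (ν t) := Real.sqrt_pos.mpr hν0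
  have hc : (0:ℝ) < Real.sqrt (1 - ν t) := Real.sqrt_pos.mpr (by linarith)
  have hs2 : Real.sqrt (ν t) * Real.sqrt (ν t) = ν t := Real.mul_self_sqrt hν0.le
  have hc2 : Real.sqrt (1 - ν t) * Real.sqrt (1 - ν t) = 1 - ν t :=
    Real.mul_self_sqrt (by linarith)
  beta_reduce
  set s := Real.sqrt (ν t) with hsdef
  set c := Real.sqrt (1 - ν t) with hcdef
  set B := deriv β t with hBdef
  set N := (1 - ν t) * β t with hNdef
  have hspace : ∀ y : ℝ, HasDerivAt
      (fun ξ => -(-(β t / 2) * ξ + (β t / s) * ((ξ - c * x₀) / s)))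
      (β t / 2 - (β t / s) * (1 / s)) y := by
    intro y
    have h1 : HasDerivAt (fun ξ : ℝ => -(β t / 2) * ξ) (-(β t / 2)) y := by
      simpa using (hasDerivAt_id y).const_mul (-(β t / 2))
    have h2 : HasDerivAt (fun ξ : ℝ => (ξ - c * x₀) / s) (1 / s) y := by
      simpa using ((hasDerivAt_id y).sub_const (c * x₀)).div_const s
    have := (h1.add (h2.const_mul (β t / s))).neg
    exact this.congr_deriv (by ring)
  have hderiv1 : deriv (fun ξ => -(-(β t / 2) * ξ + (β t / s) * ((ξ - c * x₀) / s))) x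
      = β t / 2 - (β t / s) * (1 / s) := (hspace x).deriv
  have hderivfun : deriv (fun ξ => -(-(β t / 2) * ξ + (β t / s) * ((ξ - c * x₀) / s)))
      = fun _ => β t / 2 - (β t / s) * (1 / s) := funext fun y => (hspace y).deriv
  have hderiv2 : deriv (deriv (fun ξ => -(-(β t / 2) * ξ + (β t / s) * ((ξ - c * x₀) / s)))) x = 0 := by
    rw [hderivfun]; simp
  have hb : HasDerivAt β B t := (hβ t ht).hasDerivAt
  have hn : HasDerivAt ν N t := hν t ht
  have hsν : HasDerivAt (fun τ => Real.sqrt (ν τ)) (N / (2 * s)) t := hn.sqrt hν0.ne'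
  have h1ν : HasDerivAt (fun τ => 1 - ν τ) (-N) t := by
    exact ((hasDerivAt_const t (1:ℝ)).sub hn).congr_deriv (zero_sub N)
  have hcν : HasDerivAt (fun τ => Real.sqrt (1 - ν τ)) (-N / (2 * c)) t :=
    h1ν.sqrt (by rw [← hc2]; positivity)
  have t1 : HasDerivAt (fun τ => -(β τ / 2) * x) (-(B / 2) * x) t :=
    (hb.div_const 2).neg.mul_const x
  have t2a : HasDerivAt (fun τ => β τ / Real.sqrt (ν τ))
      ((B * s - β t * (N / (2 * s))) / s ^ 2) t := hb.div hsν hs.ne'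
  have t2num : HasDerivAt (fun τ => x - Real.sqrt (1 - ν τ) * x₀)
      (0 - (-N / (2 * c)) * x₀) t := (hasDerivAt_const t x).sub (hcν.mul_const x₀)
  have t2b : HasDerivAt (fun τ => (x - Real.sqrt (1 - ν τ) * x₀) / Real.sqrt (ν τ))
      (((0 - (-N / (2 * c)) * x₀) * s - (x - c * x₀) * (N / (2 * s))) / s ^ 2) t :=
    t2num.div hsν hs.ne'
  have ttot : HasDerivAt (fun τ => -(-(β τ / 2) * x +
      (β τ / Real.sqrt (ν τ)) * ((x - Real.sqrt (1 - ν τ) * x₀) / Real.sqrt (ν τ))))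
      (-((-(B / 2) * x) + (((B * s - β t * (N / (2 * s))) / s ^ 2) * ((x - c * x₀) / s)
        + (β t / s) * (((0 - (-N / (2 * c)) * x₀) * s - (x - c * x₀) * (N / (2 * s))) / s ^ 2)))) t :=
    (t1.add (t2a.mul t2b)).neg
  have hderivt : deriv (fun τ => -(-(β τ / 2) * x +
      (β τ / Real.sqrt (ν τ)) * ((x - Real.sqrt (1 - ν τ) * x₀) / Real.sqrt (ν τ)))) t
      = -((-(B / 2) * x) + (((B * s - β t * (N / (2 * s))) / s ^ 2) * ((x - c * x₀) / s)
        + (β t / s) * (((0 - (-N / (2 * c)) * x₀) * s - (x - c * x₀) * (N / (2 * s))) / s ^ 2))) :=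
    ttot.deriv
  simp only [hderivt, hderiv1, hderiv2, hNdef]
  clear_value s c B N
  rw [← hs2] at hc2 ⊢
  field_simp
  linear_combination (-8 * s^2 * β t^2 * x₀) * hc2
end

section
/- Let I ⊆ ℝ be an open interval, β : ℝ → ℝ twice differentiable on I, and ν : ℝ → ℝ differentiable on I with 0 < ν(t) < 1 and ν'(t) = (1 − ν(t))·β(t) for t ∈ I. Fix x₀ ∈ ℝ and define the single-point score S(x,t) = (x − √(1 − ν(t))·x₀)/√(ν(t)), the probability-flow drift f♭(x,t) = −(β(t)/2)·x + (β(t)/(2√(ν(t))))·S(x,t), and the operator (L♭ φ)(x,t) = −∂φ/∂t (x,t) − f♭(x,t)·∂φ/∂x (x,t). Then for all x ∈ ℝ, t ∈ I and h ∈ ℝ, x + h·(−f♭)(x,t) + (h²/2)·(L♭(−f♭))(x,t) + (h³/6)·(L♭(L♭(−f♭)))(x,t) = ρ(t,h)·x + μ(t,h)·S(x,t)/√(ν(t)), where ρ(t,h) = 1 + β(t)h/2 + (h²/4)·(β(t)²/2 − β'(t)) + (h³/4)·(β(t)³/12 − β(t)β'(t)/2 + β''(t)/3) and μ(t,h) =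 −β(t)h/2 + (h²/4)·(β'(t) − β(t)²/(2ν(t))) + (h³/4)·( β(t)³·(−ν(t)² + 3ν(t) − 3)/(12ν(t)²) + β(t)β'(t)/(2ν(t)) − β''(t)/3 ). -/
open Real

set_option maxHeartbeats 4000000 in
theorem quasi_taylor_third_order_update
    (I : Set ℝ) (hI : IsOpen I)
    (β ν : ℝ → ℝ)
    (hβ : ∀ t ∈ I, DifferentiableAt ℝ β t)
    (hβ' : ∀ t ∈ I, DifferentiableAt ℝ (deriv β) t)
    (hν01 : ∀ t ∈ I, 0 < ν t ∧ ν t < 1)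
    (hν : ∀ t ∈ I, HasDerivAt ν ((1 - ν t) * β t) t)
    (x₀ : ℝ)
    (S : ℝ → ℝ → ℝ)
    (hS : S = fun x t => (x - Real.sqrt (1 - ν t) * x₀) / Real.sqrt (ν t))
    (f : ℝ → ℝ → ℝ)
    (hf : f = fun x t => -(β t / 2) * x + (β t / (2 * Real.sqrt (ν t))) * S x t)
    (L : (ℝ → ℝ → ℝ) → ℝ → ℝ → ℝ)
    (hL : L = fun φ x t =>
      -(deriv (fun τ => φ x τ) t) - f x t * deriv (fun ξ => φ ξ t) x)
    (ρ μ : ℝ → ℝ → ℝ)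
    (hρ : ρ = fun t h => 1 + β t * h / 2
      + (h ^ 2 / 4) * (β t ^ 2 / 2 - deriv β t)
      + (h ^ 3 / 4) * (β t ^ 3 / 12 - β t * deriv β t / 2 + deriv (deriv β) t / 3))
    (hμ : μ = fun t h => -(β t * h / 2)
      + (h ^ 2 / 4) * (deriv β t - β t ^ 2 / (2 * ν t))
      + (h ^ 3 / 4) * (β t ^ 3 * (-(ν t ^ 2) + 3 * ν t - 3) / (12 * ν t ^ 2)
          + β t * deriv β t / (2 * ν t) - deriv (deriv β) t / 3)) :
    ∀ x : ℝ, ∀ t ∈ I, ∀ h : ℝ,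
      x + h * (-f x t) + (h ^ 2 / 2) * L (fun x t => -f x t) x t
          + (h ^ 3 / 6) * L (L (fun x t => -f x t)) x t
        = ρ t h * x + μ t h * S x t / Real.sqrt (ν t) := by
  intro x t ht h
  -- basic derivative facts
  have hb : ∀ s ∈ I, HasDerivAt β (deriv β s) s := fun s hs => (hβ s hs).hasDerivAt
  have hb1 : ∀ s ∈ I, HasDerivAt (deriv β) (deriv (deriv β) s) s :=
    fun s hs => (hβ' s hs).hasDerivAt
  have hn2 : ∀ s ∈ I, 2 * ν s ≠ 0 := by
    intro s hs
    have := (hν01 s hs).1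
    positivity
  -- derivative of u τ = √(1-ν τ) * x₀
  have hu : ∀ s ∈ I, HasDerivAt (fun τ => Real.sqrt (1 - ν τ) * x₀)
      (-(β s / 2) * (Real.sqrt (1 - ν s) * x₀)) s := by
    intro s hs
    obtain ⟨h0, h1⟩ := hν01 s hs
    have h1n : (0:ℝ) < 1 - ν s := by linarith
    have hwne : Real.sqrt (1 - ν s) ≠ 0 := by positivity
    have hww : Real.sqrt (1 - ν s) ^ 2 = 1 - ν s := Real.sq_sqrt h1n.le
    have h2 : HasDerivAt (fun τ => Real.sqrt (1 - ν τ))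
        (-((1 - ν s) * β s) / (2 * Real.sqrt (1 - ν s))) s :=
      (((hν s hs).const_sub 1).sqrt (ne_of_gt h1n))
    have h3 := h2.mul_const x₀
    refine h3.congr_deriv (Eq.symm ?_)
    field_simp
    linear_combination (-(β s * x₀)) * hww
  -- closed form of -f on I
  have hg1 : ∀ (y : ℝ), ∀ s ∈ I, -f y s
      = (β s / 2 - β s / (2 * ν s)) * y + β s * (Real.sqrt (1 - ν s) * x₀) / (2 * ν s) := by
    intro y s hs
    obtain ⟨h0, h1⟩ := hν01 s hs
    rw [hf, hS]
    have hsne : Real.sqrt (ν s) ≠ 0 := by positivity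
    have hss : Real.sqrt (ν s) ^ 2 = ν s := Real.sq_sqrt h0.le
    have hn0 : ν s ≠ 0 := ne_of_gt h0
    field_simp
    ring_nf
    rw [hss]
    ring
  -- derivative of P1 τ = β τ/2 - β τ/(2 ν τ)
  have hP1' : ∀ s ∈ I, HasDerivAt (fun τ => β τ / 2 - β τ / (2 * ν τ))
      (deriv β s / 2
        - (deriv β s * (2 * ν s) - β s * (2 * ((1 - ν s) * β s))) / (2 * ν s) ^ 2) s := by
    intro s hs
    exact ((hb s hs).div_const 2).sub
      (((hb s hs).div ((hν s hs).const_mul 2) (hn2 s hs)))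
  -- derivative of Q1 τ = β τ * (√(1-ν τ) x₀) / (2 ν τ)
  have hQ1' : ∀ s ∈ I, HasDerivAt (fun τ => β τ * (Real.sqrt (1 - ν τ) * x₀) / (2 * ν τ))
      (((deriv β s * (Real.sqrt (1 - ν s) * x₀)
          + β s * (-(β s / 2) * (Real.sqrt (1 - ν s) * x₀))) * (2 * ν s)
        - β s * (Real.sqrt (1 - ν s) * x₀) * (2 * ((1 - ν s) * β s))) / (2 * ν s) ^ 2) s := by
    intro s hs
    exact ((hb s hs).mul (hu s hs)).div ((hν s hs).const_mul 2) (hn2 s hs)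
  -- closed form of L(-f) on I
  have hg2 : ∀ (y : ℝ), ∀ s ∈ I, L (fun x t => -f x t) y s
      = ((β s / 2 - β s / (2 * ν s)) ^ 2
          - (deriv β s / 2
            - (deriv β s * (2 * ν s) - β s * (2 * ((1 - ν s) * β s))) / (2 * ν s) ^ 2)) * y
        + (β s * (Real.sqrt (1 - ν s) * x₀) / (2 * ν s) * (β s / 2 - β s / (2 * ν s))
          - ((deriv β s * (Real.sqrt (1 - ν s) * x₀)
              + β s * (-(β s / 2) * (Real.sqrt (1 - ν s) * x₀))) * (2 * ν s)
            - β s * (Real.sqrt (1 - ν s) * x₀) * (2 * ((1 - ν s) * β s))) / (2 * ν s) ^ 2) := by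
    intro y s hs
    have heq : (fun τ => -f y τ) =ᶠ[nhds s]
        (fun τ => (β τ / 2 - β τ / (2 * ν τ)) * y
          + β τ * (Real.sqrt (1 - ν τ) * x₀) / (2 * ν τ)) := by
      filter_upwards [hI.mem_nhds hs] with τ hτ
      exact hg1 y τ hτ
    have hEt : deriv (fun τ => -f y τ) s
        = (deriv β s / 2
            - (deriv β s * (2 * ν s) - β s * (2 * ((1 - ν s) * β s))) / (2 * ν s) ^ 2) * y
          + (((deriv β s * (Real.sqrt (1 - ν s) * x₀)
              + β s * (-(β s / 2) * (Real.sqrt (1 - ν s) * x₀))) * (2 * ν s)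
            - β s * (Real.sqrt (1 - ν s) * x₀) * (2 * ((1 - ν s) * β s))) / (2 * ν s) ^ 2) := by
      rw [heq.deriv_eq]
      exact (((hP1' s hs).mul_const y).add (hQ1' s hs)).deriv
    have hEx : deriv (fun ξ => -f ξ s) y = β s / 2 - β s / (2 * ν s) := by
      have hfn : (fun ξ => -f ξ s)
          = fun ξ => (β s / 2 - β s / (2 * ν s)) * ξ
            + β s * (Real.sqrt (1 - ν s) * x₀) / (2 * ν s) :=
        funext fun ξ => hg1 ξ s hs
      rw [hfn]
      have := (((hasDerivAt_id y).const_mul (β s / 2 - β s / (2 * ν s))).add_const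
        (β s * (Real.sqrt (1 - ν s) * x₀) / (2 * ν s))).deriv
      simpa using this
    have hfy : f y s = -((β s / 2 - β s / (2 * ν s)) * y
        + β s * (Real.sqrt (1 - ν s) * x₀) / (2 * ν s)) := by
      have := hg1 y s hs; linarith
    simp only [hL]
    rw [hEt, hEx, hfy]
    ring
  -- third-order term: derivatives of P2 and Q2 at t
  have HP2 := ((hP1' t ht).pow 2).sub
    (((hb1 t ht).div_const 2).sub
      ((((hb1 t ht).mul ((hν t ht).const_mul 2)).sub
          ((hb t ht).mul ((((hν t ht).const_sub 1).mul (hb t ht)).const_mul 2))).div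
        (((hν t ht).const_mul 2).pow 2) (pow_ne_zero 2 (hn2 t ht))))
  have HQ2 := (((hb t ht).mul (hu t ht)).div ((hν t ht).const_mul 2) (hn2 t ht)).mul (hP1' t ht)
  have HddQ1 := ((((hb1 t ht).mul (hu t ht)).add
        ((hb t ht).mul ((((hb t ht).div_const 2).neg).mul (hu t ht)))).mul
          ((hν t ht).const_mul 2)).sub
      (((hb t ht).mul (hu t ht)).mul ((((hν t ht).const_sub 1).mul (hb t ht)).const_mul 2))
  have HQ2' := HQ2.sub (HddQ1.div (((hν t ht).const_mul 2).pow 2) (pow_ne_zero 2 (hn2 t ht)))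
  have H3 := (HP2.mul_const x).add HQ2'
  -- compute L (L (-f)) x t
  have heq2 : (fun τ => L (fun x t => -f x t) x τ) =ᶠ[nhds t]
      (fun τ => ((β τ / 2 - β τ / (2 * ν τ)) ^ 2
          - (deriv β τ / 2
            - (deriv β τ * (2 * ν τ) - β τ * (2 * ((1 - ν τ) * β τ))) / (2 * ν τ) ^ 2)) * x
        + (β τ * (Real.sqrt (1 - ν τ) * x₀) / (2 * ν τ) * (β τ / 2 - β τ / (2 * ν τ))
          - ((deriv β τ * (Real.sqrt (1 - ν τ) * x₀)
              + β τ * (-(β τ / 2) * (Real.sqrt (1 - ν τ) * x₀))) * (2 * ν τ)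
            - β τ * (Real.sqrt (1 - ν τ) * x₀) * (2 * ((1 - ν τ) * β τ))) / (2 * ν τ) ^ 2)) := by
    filter_upwards [hI.mem_nhds ht] with τ hτ
    exact hg2 x τ hτ
  have hfn2 : (fun ξ => L (fun x t => -f x t) ξ t)
      = fun ξ => ((β t / 2 - β t / (2 * ν t)) ^ 2
          - (deriv β t / 2
            - (deriv β t * (2 * ν t) - β t * (2 * ((1 - ν t) * β t))) / (2 * ν t) ^ 2)) * ξ
        + (β t * (Real.sqrt (1 - ν t) * x₀) / (2 * ν t) * (β t / 2 - β t / (2 * ν t))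
          - ((deriv β t * (Real.sqrt (1 - ν t) * x₀)
              + β t * (-(β t / 2) * (Real.sqrt (1 - ν t) * x₀))) * (2 * ν t)
            - β t * (Real.sqrt (1 - ν t) * x₀) * (2 * ((1 - ν t) * β t))) / (2 * ν t) ^ 2) :=
    funext fun ξ => hg2 ξ t ht
  have hEx2 : deriv (fun ξ => L (fun x t => -f x t) ξ t) x
      = (β t / 2 - β t / (2 * ν t)) ^ 2
          - (deriv β t / 2
            - (deriv β t * (2 * ν t) - β t * (2 * ((1 - ν t) * β t))) / (2 * ν t) ^ 2) := by
    rw [hfn2]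
    have := (((hasDerivAt_id x).const_mul ((β t / 2 - β t / (2 * ν t)) ^ 2
          - (deriv β t / 2
            - (deriv β t * (2 * ν t) - β t * (2 * ((1 - ν t) * β t))) / (2 * ν t) ^ 2))).add_const
        (β t * (Real.sqrt (1 - ν t) * x₀) / (2 * ν t) * (β t / 2 - β t / (2 * ν t))
          - ((deriv β t * (Real.sqrt (1 - ν t) * x₀)
              + β t * (-(β t / 2) * (Real.sqrt (1 - ν t) * x₀))) * (2 * ν t)
            - β t * (Real.sqrt (1 - ν t) * x₀) * (2 * ((1 - ν t) * β t))) / (2 * ν t) ^ 2)).deriv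
    simpa using this
  have hLL : L (L (fun x t => -f x t)) x t
      = -(deriv (fun τ => L (fun x t => -f x t) x τ) t)
        - f x t * deriv (fun ξ => L (fun x t => -f x t) ξ t) x := by
    rw [hL]
  rw [hLL, heq2.deriv_eq]
  erw [H3.deriv]
  simp only [Pi.pow_apply, Pi.mul_apply, Pi.add_apply, Pi.sub_apply, Pi.neg_apply, Pi.div_apply]
  rw [hEx2, hg2 x t ht]
  have hfx : f x t = -((β t / 2 - β t / (2 * ν t)) * x
      + β t * (Real.sqrt (1 - ν t) * x₀) / (2 * ν t)) := by
    have := hg1 x t ht; linarith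
  have hSdiv : S x t / Real.sqrt (ν t) = (x - Real.sqrt (1 - ν t) * x₀) / ν t := by
    rw [hS]
    obtain ⟨h0, _⟩ := hν01 t ht
    rw [div_div, Real.mul_self_sqrt h0.le]
  have hR : μ t h * S x t / Real.sqrt (ν t)
      = μ t h * ((x - Real.sqrt (1 - ν t) * x₀) / ν t) := by
    rw [mul_div_assoc, hSdiv]
  rw [hg1 x t ht, hfx, hR, hρ, hμ]
  obtain ⟨h0, _⟩ := hν01 t ht
  have hn0 : ν t ≠ 0 := ne_of_gt h0
  push_cast
  field_simp
  ring
end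

section
/- Let I ⊆ ℝ be an open interval, β : ℝ → ℝ differentiable on I, and ν : ℝ → ℝ differentiable on I with 0 < ν(t) < 1 and ν'(t) = (1 − ν(t))·β(t) for t ∈ I. Fix x₀ ∈ ℝ and define the single-point score S(x,t) = (x − √(1 − ν(t))·x₀)/√(ν(t)), the reverse-SDE drift f♯(x,t) = −(β(t)/2)·x + (β(t)/√(ν(t)))·S(x,t), and the operator (L♯ φ)(x,t) = −∂φ/∂t (x,t) − f♯(x,t)·∂φ/∂x (x,t) + (β(t)/2)·∂²φ/∂x² (x,t). Then for all x ∈ ℝ, t ∈ I and h ∈ ℝ, x + h·(−f♯)(x,t) + (h²/2)·(L♯(−f♯))(x,t) = ρ♯(t,h)·x + μ♯(t,h)·S(x,t)/√(ν(t)), where ρ♯(t,h) = 1 + β(t)h/2 + (h²/4)·(β(t)²/2 − β'(t)) and μ♯(t,h) = −β(t)h + β'(t)h²/2. -/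
open Real

theorem quasi_ito_taylor_drift_update
    (I : Set ℝ) (hI : IsOpen I)
    (β ν : ℝ → ℝ)
    (hβ : ∀ t ∈ I, DifferentiableAt ℝ β t)
    (hν01 : ∀ t ∈ I, 0 < ν t ∧ ν t < 1)
    (hν : ∀ t ∈ I, HasDerivAt ν ((1 - ν t) * β t) t)
    (x₀ : ℝ)
    (S : ℝ → ℝ → ℝ)
    (hS : S = fun x t => (x - Real.sqrt (1 - ν t) * x₀) / Real.sqrt (ν t))
    (f : ℝ → ℝ → ℝ)
    (hf : f = fun x t => -(β t / 2) * x + (β t / Real.sqrt (ν t)) * S x t)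
    (L : (ℝ → ℝ → ℝ) → ℝ → ℝ → ℝ)
    (hL : L = fun φ x t =>
      -(deriv (fun τ => φ x τ) t) - f x t * deriv (fun ξ => φ ξ t) x
        + (β t / 2) * deriv (deriv (fun ξ => φ ξ t)) x)
    (ρ μ : ℝ → ℝ → ℝ)
    (hρ : ρ = fun t h => 1 + β t * h / 2 + (h ^ 2 / 4) * (β t ^ 2 / 2 - deriv β t))
    (hμ : μ = fun t h => -(β t * h) + deriv β t * h ^ 2 / 2) :
    ∀ x : ℝ, ∀ t ∈ I, ∀ h : ℝ,
      x + h * (-f x t) + (h ^ 2 / 2) * L (fun x t => -f x t) x t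
        = ρ t h * x + μ t h * S x t / Real.sqrt (ν t) := by
  intro x t ht h
  obtain ⟨hn0, hn1⟩ := hν01 t ht
  have hs : (0:ℝ) < Real.sqrt (ν t) := Real.sqrt_pos.mpr hn0
  have hs1 : (0:ℝ) < Real.sqrt (1 - ν t) := Real.sqrt_pos.mpr (by linarith)
  have hss : Real.sqrt (ν t) * Real.sqrt (ν t) = ν t := Real.mul_self_sqrt hn0.le
  have hs1s1 : Real.sqrt (1 - ν t) * Real.sqrt (1 - ν t) = 1 - ν t :=
    Real.mul_self_sqrt (by linarith)
  -- simplified form of -f on I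
  have hform : ∀ τ ∈ I, ∀ ξ : ℝ,
      -f ξ τ = (β τ / 2) * ξ - β τ * (ξ - Real.sqrt (1 - ν τ) * x₀) / ν τ := by
    intro τ hτ ξ
    obtain ⟨h0, h1⟩ := hν01 τ hτ
    have hsne : Real.sqrt (ν τ) ≠ 0 := ne_of_gt (Real.sqrt_pos.mpr h0)
    rw [hf, hS]
    field_simp
    rw [Real.sq_sqrt h0.le]; ring
  -- spatial derivative of -f at time t is constant
  have hxfun : (fun ξ => -f ξ t)
      = fun ξ => (β t / 2 - β t / ν t) * ξ + β t * (Real.sqrt (1 - ν t) * x₀) / ν t := by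
    funext ξ
    rw [hform t ht ξ]
    field_simp
    ring
  have hderivx : deriv (fun ξ => -f ξ t) = fun _ => (β t / 2 - β t / ν t) := by
    funext ξ
    rw [hxfun]
    have hc : HasDerivAt
        (fun ξ : ℝ => (β t / 2 - β t / ν t) * ξ + β t * (Real.sqrt (1 - ν t) * x₀) / ν t)
        (β t / 2 - β t / ν t) ξ := by
      simpa using ((hasDerivAt_id ξ).const_mul (β t / 2 - β t / ν t)).add_const
        (β t * (Real.sqrt (1 - ν t) * x₀) / ν t)
    exact hc.deriv
  have hderivxx : deriv (deriv (fun ξ => -f ξ t)) x = 0 := by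
    rw [hderivx]; exact deriv_const x _
  -- time derivative
  set b' := deriv β t with hb'
  have hβ' : HasDerivAt β b' t := (hβ t ht).hasDerivAt
  have hν' : HasDerivAt ν ((1 - ν t) * β t) t := hν t ht
  have hsqrt1 : HasDerivAt (fun τ => Real.sqrt (1 - ν τ))
      ((0 - (1 - ν t) * β t) / (2 * Real.sqrt (1 - ν t))) t :=
    ((hasDerivAt_const t (1:ℝ)).sub hν').sqrt (ne_of_gt (by show (0:ℝ) < 1 - ν t; linarith))
  have hA : HasDerivAt (fun τ => x - Real.sqrt (1 - ν τ) * x₀)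
      (0 - ((0 - (1 - ν t) * β t) / (2 * Real.sqrt (1 - ν t))) * x₀) t :=
    (hasDerivAt_const t x).sub (hsqrt1.mul_const x₀)
  have hg : HasDerivAt (fun τ => (β τ / 2) * x - β τ * (x - Real.sqrt (1 - ν τ) * x₀) / ν τ)
      ((b' / 2) * x -
        ((b' * (x - Real.sqrt (1 - ν t) * x₀)
            + β t * (0 - ((0 - (1 - ν t) * β t) / (2 * Real.sqrt (1 - ν t))) * x₀)) * ν t
          - β t * (x - Real.sqrt (1 - ν t) * x₀) * ((1 - ν t) * β t)) / (ν t) ^ 2) t :=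
    ((hβ'.div_const 2).mul_const x).sub ((hβ'.mul hA).div hν' (ne_of_gt hn0))
  have hderivt : deriv (fun τ => -f x τ) t
      = (b' / 2) * x -
        ((b' * (x - Real.sqrt (1 - ν t) * x₀)
            + β t * (0 - ((0 - (1 - ν t) * β t) / (2 * Real.sqrt (1 - ν t))) * x₀)) * ν t
          - β t * (x - Real.sqrt (1 - ν t) * x₀) * ((1 - ν t) * β t)) / (ν t) ^ 2 := by
    have heq : (fun τ => -f x τ)
        =ᶠ[nhds t] fun τ => (β τ / 2) * x - β τ * (x - Real.sqrt (1 - ν τ) * x₀) / ν τ := by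
      filter_upwards [hI.mem_nhds ht] with τ hτ using hform τ hτ x
    rw [heq.deriv_eq, hg.deriv]
  have hfx : f x t = -((β t / 2) * x - β t * (x - Real.sqrt (1 - ν t) * x₀) / ν t) := by
    have := hform t ht x; linarith
  have hRHS : μ t h * S x t / Real.sqrt (ν t)
      = μ t h * (x - Real.sqrt (1 - ν t) * x₀) / ν t := by
    simp only [hS]
    rw [← mul_div_assoc, div_div, hss]
  -- put everything together
  simp only [hL]
  rw [hderivt]
  simp only [hderivx]
  rw [deriv_const, hform t ht x, hfx, hRHS, hρ, hμ]
  have hs1ne : Real.sqrt (1 - ν t) ≠ 0 := ne_of_gt hs1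
  set s1 := Real.sqrt (1 - ν t) with hs1d
  have key : ν t = 1 - s1 * s1 := by linarith
  rw [key]
  have hone : (1:ℝ) - s1 * s1 ≠ 0 := by rw [← key]; exact hn0.ne'
  have hone2 : (1:ℝ) - s1 ^ 2 ≠ 0 := by rw [sq]; exact hone
  simp only [← hb']
  field_simp
  ring
end

section
/- Let β : ℝ → ℝ be twice continuously differentiable and ν : ℝ → ℝ differentiable with 0 < ν(t) < 1 and ν'(t) = (1 − ν(t))·β(t) for all t. Fix t ∈ ℝ. Then, as h → 0, √( (1 − ν(t−h)) / (1 − ν(t)) ) − [ 1 + β(t)h/2 + (h²/4)·(β(t)²/2 − β'(t)) + (h³/4)·(β(t)³/12 − β(t)β'(t)/2 + β''(t)/3) ] = o(h³). -/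
open Real Filter Asymptotics Topology

/-- Mean value step: if `F 0 = 0` and `F' = o(hⁿ)` at `0`, then `F = o(hⁿ⁺¹)`. -/
private lemma step_littleO {F F' : ℝ → ℝ} {n : ℕ}
    (hd : ∀ x, HasDerivAt F (F' x) x) (h0 : F 0 = 0)
    (ho : F' =o[𝓝 0] fun h : ℝ => h ^ n) :
    F =o[𝓝 0] fun h : ℝ => h ^ (n + 1) := by
  rw [Asymptotics.isLittleO_iff] at ho ⊢
  intro ε hε
  have hb := ho hε
  rw [Metric.eventually_nhds_iff] at hb ⊢
  obtain ⟨δ, hδ, hball⟩ := hb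
  refine ⟨δ, hδ, fun {h} hh => ?_⟩
  have hhδ : |h| < δ := by simpa [Real.dist_eq] using hh
  have key : ‖F h - F 0‖ ≤ ε * |h| ^ n * ‖h - 0‖ := by
    refine (convex_closedBall (0 : ℝ) |h|).norm_image_sub_le_of_norm_hasDerivWithin_le
      (f' := F') (fun x _ => (hd x).hasDerivWithinAt) (fun x hx => ?_) ?_ ?_
    · have hx' : |x| ≤ |h| := by simpa [Real.dist_eq] using hx
      have hxδ : dist x 0 < δ := by
        rw [Real.dist_eq, sub_zero]; exact lt_of_le_of_lt hx' hhδ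
      calc ‖F' x‖ ≤ ε * ‖x ^ n‖ := hball hxδ
        _ ≤ ε * |h| ^ n := by
            rw [Real.norm_eq_abs, abs_pow]
            exact mul_le_mul_of_nonneg_left (pow_le_pow_left₀ (abs_nonneg _) hx' n) hε.le
    · simp [Metric.mem_closedBall, Real.dist_eq]
    · simp [Metric.mem_closedBall, Real.dist_eq]
  have : ‖F h‖ ≤ ε * |h| ^ (n + 1) := by
    have : ‖F h‖ ≤ ε * |h| ^ n * |h| := by
      simpa [h0, Real.norm_eq_abs] using key
    calc ‖F h‖ ≤ ε * |h| ^ n * |h| := this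
      _ = ε * |h| ^ (n + 1) := by ring
  simpa [Real.norm_eq_abs, abs_pow] using this

private lemma sqrt_deriv_alg {s v b : ℝ} (hs : s ≠ 0) (hv : s * s = v) :
    1 / (2 * s) * (v * b) = s * b / 2 := by
  subst hv; field_simp

/-- Three applications of the step lemma give a third-order Peano expansion. -/
private lemma chain3_littleO {F G1 G2 : ℝ → ℝ}
    (h1 : ∀ x, HasDerivAt F (G1 x) x)
    (h2 : ∀ x, HasDerivAt G1 (G2 x) x)
    (h3 : HasDerivAt G2 0 0)
    (hF0 : F 0 = 0) (hG10 : G1 0 = 0) (hG20 : G2 0 = 0) :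
    F =o[𝓝 0] fun h : ℝ => h ^ 3 := by
  have o1 : G2 =o[𝓝 0] fun h : ℝ => h ^ 1 := by
    have h := hasDerivAt_iff_isLittleO.mp h3
    simpa [hG20] using h
  have o2 : G1 =o[𝓝 0] fun h : ℝ => h ^ 2 := step_littleO h2 hG10 o1
  exact step_littleO h1 hF0 o2

theorem ddim_x_coefficient_third_order
    (β ν : ℝ → ℝ)
    (hβ : ContDiff ℝ 2 β)
    (hν01 : ∀ t, 0 < ν t ∧ ν t < 1)
    (hν : ∀ t, HasDerivAt ν ((1 - ν t) * β t) t)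
    (t : ℝ) :
    (fun h : ℝ =>
        Real.sqrt ((1 - ν (t - h)) / (1 - ν t))
          - (1 + β t * h / 2
              + (h ^ 2 / 4) * (β t ^ 2 / 2 - deriv β t)
              + (h ^ 3 / 4) * (β t ^ 3 / 12 - β t * deriv β t / 2
                  + deriv (deriv β) t / 3)))
      =o[𝓝 0] fun h : ℝ => h ^ 3 := by
  -- regularity of β
  have hβd : ∀ x, HasDerivAt β (deriv β x) x := fun x =>
    ((hβ.differentiable (by norm_num)) x).hasDerivAt
  have hβ1 : ContDiff ℝ 1 (deriv β) := by
    have h2 : ContDiff ℝ (1 + 1 : ℕ) β := by exact_mod_cast hβ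
    exact (contDiff_succ_iff_deriv.mp h2).2.2
  have hβ'd : ∀ x, HasDerivAt (deriv β) (deriv (deriv β) x) x := fun x =>
    ((hβ1.differentiable (by norm_num)) x).hasDerivAt
  -- positivity
  have hν1 : ∀ s, (0 : ℝ) < 1 - ν s := fun s => by linarith [(hν01 s).2]
  have hD0 : (0 : ℝ) < 1 - ν t := hν1 t
  -- the basic function u and F = sqrt u
  set u : ℝ → ℝ := fun h => (1 - ν (t - h)) / (1 - ν t) with hudef
  have hupos : ∀ h, 0 < u h := fun h => div_pos (hν1 _) hD0
  set F : ℝ → ℝ := fun h => Real.sqrt (u h) with hFdef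
  have hFpos : ∀ h, 0 < F h := fun h => Real.sqrt_pos.mpr (hupos h)
  have hF0 : F 0 = 1 := by
    simp only [hFdef, hudef, sub_zero]
    rw [div_self (ne_of_gt hD0), Real.sqrt_one]
  -- derivative of inner affine map
  have hinner : ∀ h : ℝ, HasDerivAt (fun x : ℝ => t - x) (-1) h := fun h => by
    simpa using (hasDerivAt_const h t).fun_sub (hasDerivAt_id h)
  have hbd : ∀ h : ℝ, HasDerivAt (fun x : ℝ => β (t - x)) (-(deriv β (t - h))) h :=
    fun h => by simpa [Function.comp_def] using ((hβd (t - h)).comp h (hinner h))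
  have hb'd : ∀ h : ℝ,
      HasDerivAt (fun x : ℝ => deriv β (t - x)) (-(deriv (deriv β) (t - h))) h :=
    fun h => by simpa [Function.comp_def] using ((hβ'd (t - h)).comp h (hinner h))
  -- derivative of u
  have hud : ∀ h, HasDerivAt u (u h * β (t - h)) h := by
    intro h
    have h1 : HasDerivAt (fun x : ℝ => ν (t - x)) ((1 - ν (t - h)) * β (t - h) * (-1)) h :=
      (hν (t - h)).comp h (hinner h)
    have h2 : HasDerivAt u
        ((0 - (1 - ν (t - h)) * β (t - h) * (-1)) / (1 - ν t)) h := by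
      exact ((hasDerivAt_const h (1 : ℝ)).sub h1).div_const (1 - ν t)
    convert h2 using 1
    simp only [hudef]
    field_simp
    ring
  -- derivative of F
  have hFd : ∀ h, HasDerivAt F (F h * β (t - h) / 2) h := by
    intro h
    have h1 : HasDerivAt F (1 / (2 * Real.sqrt (u h)) * (u h * β (t - h))) h :=
      (Real.hasDerivAt_sqrt (ne_of_gt (hupos h))).comp h (hud h)
    convert h1 using 1
    have hsq : Real.sqrt (u h) * Real.sqrt (u h) = u h := Real.mul_self_sqrt (hupos h).le
    have hsne : Real.sqrt (u h) ≠ 0 := ne_of_gt (hFpos h)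
    exact (sqrt_deriv_alg hsne hsq).symm
  -- abbreviations for the Taylor coefficients
  set c2 : ℝ := β t ^ 2 / 2 - deriv β t with hc2def
  set c3 : ℝ := β t ^ 3 / 12 - β t * deriv β t / 2 + deriv (deriv β) t / 3 with hc3def
  -- the remainder and its successive derivatives
  set R : ℝ → ℝ := fun h =>
    F h - (1 + β t * h / 2 + h ^ 2 / 4 * c2 + h ^ 3 / 4 * c3) with hRdef
  set G1 : ℝ → ℝ := fun h =>
    F h * β (t - h) / 2 - (β t / 2 + h / 2 * c2 + 3 * h ^ 2 / 4 * c3) with hG1def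
  set G2 : ℝ → ℝ := fun h =>
    F h * (β (t - h) ^ 2 / 4 - deriv β (t - h) / 2) - (c2 / 2 + 3 * h / 2 * c3) with hG2def
  set G3 : ℝ → ℝ := fun h =>
    F h * (β (t - h) ^ 3 / 8 - 3 * β (t - h) * deriv β (t - h) / 4
      + deriv (deriv β) (t - h) / 2) - 3 / 2 * c3 with hG3def
  have hRd : ∀ h, HasDerivAt R (G1 h) h := by
    intro h
    have hp : HasDerivAt (fun h : ℝ => 1 + β t * h / 2 + h ^ 2 / 4 * c2 + h ^ 3 / 4 * c3)
        (β t / 2 + h / 2 * c2 + 3 * h ^ 2 / 4 * c3) h := by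
      have := (((hasDerivAt_const h (1 : ℝ)).fun_add
        (((hasDerivAt_id h).const_mul (β t)).div_const 2)).fun_add
        (((hasDerivAt_pow 2 h).div_const 4).mul_const c2)).fun_add
        (((hasDerivAt_pow 3 h).div_const 4).mul_const c3)
      refine this.congr_deriv ?_
      ring
    simpa only [hG1def] using (hFd h).fun_sub hp
  have hG1d : ∀ h, HasDerivAt G1 (G2 h) h := by
    intro h
    have hp : HasDerivAt (fun h : ℝ => β t / 2 + h / 2 * c2 + 3 * h ^ 2 / 4 * c3)
        (c2 / 2 + 3 * h / 2 * c3) h := by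
      have := ((hasDerivAt_const h (β t / 2)).fun_add
        (((hasDerivAt_id h).div_const 2).mul_const c2)).fun_add
        ((((hasDerivAt_pow 2 h).const_mul 3).div_const 4).mul_const c3)
      refine this.congr_deriv ?_
      ring
    have hmain : HasDerivAt (fun h => F h * β (t - h) / 2)
        (F h * (β (t - h) ^ 2 / 4 - deriv β (t - h) / 2)) h := by
      have := ((hFd h).fun_mul (hbd h)).div_const 2
      refine this.congr_deriv ?_
      ring
    simpa only [hG2def] using hmain.fun_sub hp
  have hG2d : ∀ h, HasDerivAt G2 (G3 h) h := by
    intro h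
    have hq : HasDerivAt (fun h : ℝ => β (t - h) ^ 2 / 4 - deriv β (t - h) / 2)
        (2 * β (t - h) * (-(deriv β (t - h))) / 4 - (-(deriv (deriv β) (t - h))) / 2) h := by
      have h1 : HasDerivAt (fun x : ℝ => β (t - x) ^ 2)
          (2 * β (t - h) * (-(deriv β (t - h)))) h := by
        have := (hbd h).fun_pow 2
        refine this.congr_deriv ?_
        ring
      exact (h1.div_const 4).sub ((hb'd h).div_const 2)
    have hp : HasDerivAt (fun h : ℝ => c2 / 2 + 3 * h / 2 * c3) (3 / 2 * c3) h := by
      have := (hasDerivAt_const h (c2 / 2)).fun_add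
        ((((hasDerivAt_id h).const_mul 3).div_const 2).mul_const c3)
      refine this.congr_deriv ?_
      ring
    have hmain := ((hFd h).fun_mul hq).fun_sub hp
    refine hmain.congr_deriv ?_
    simp only [hG3def]
    ring
  -- values at 0
  have hG10 : G1 0 = 0 := by
    simp only [hG1def, hF0, sub_zero]
    ring
  have hG20 : G2 0 = 0 := by
    simp only [hG2def, hF0, sub_zero, hc2def]
    ring
  have hG30 : G3 0 = 0 := by
    simp only [hG3def, hF0, sub_zero, hc3def]
    ring
  have hR0 : R 0 = 0 := by
    simp only [hRdef, hF0]
    ring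
  have hG2d0 : HasDerivAt G2 0 0 := by
    have := hG2d 0
    rwa [hG30] at this
  have hmain : R =o[𝓝 0] fun h : ℝ => h ^ 3 :=
    chain3_littleO hRd hG1d hG2d0 hR0 hG10 hG20
  exact hmain
end

section
/- Let β : ℝ → ℝ be twice continuously differentiable and ν : ℝ → ℝ differentiable with 0 < ν(t) < 1 and ν'(t) = (1 − ν(t))·β(t) for all t. Fix t ∈ ℝ. Then, as h → 0, √(ν(t)) · ( √((1 − ν(t))·ν(t−h)) − √((1 − ν(t−h))·ν(t)) ) / √(1 − ν(t)) − [ −β(t)h/2 + (h²/4)·(β'(t) − β(t)²/(2ν(t))) + (h³/4)·( β(t)³·(−ν(t)² + 3ν(t) − 3)/(12ν(t)²) + β(t)β'(t)/(2ν(t)) − β''(t)/3 ) ] = o(h³). -/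
open Real Filter Asymptotics Topology

private lemma step_littleo {n : ℕ} {g g' : ℝ → ℝ} (h0 : g 0 = 0)
    (hd : ∀ x : ℝ, HasDerivAt g (g' x) x)
    (ho : g' =o[𝓝 (0:ℝ)] fun h => h ^ n) :
    g =o[𝓝 (0:ℝ)] fun h : ℝ => h ^ (n + 1) := by
  rw [isLittleO_iff] at ho ⊢
  intro c hc
  have ho' := ho hc
  rw [Metric.eventually_nhds_iff] at ho' ⊢
  obtain ⟨δ, hδ, hball⟩ := ho'
  refine ⟨δ, hδ, fun {h} hh => ?_⟩
  have key : ∀ x ∈ Set.uIcc (0:ℝ) h, ‖g' x‖ ≤ c * |h| ^ n := by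
    intro x hx
    have hxh : |x| ≤ |h| := by
      rcases le_total 0 h with hh0 | hh0
      · rw [Set.uIcc_of_le hh0] at hx
        rw [abs_of_nonneg hx.1, abs_of_nonneg hh0]; exact hx.2
      · rw [Set.uIcc_of_ge hh0] at hx
        rw [abs_of_nonpos hx.2, abs_of_nonpos hh0]; linarith [hx.1]
    have hxδ : dist x 0 < δ := by
      rw [Real.dist_eq, sub_zero]
      calc |x| ≤ |h| := hxh
        _ < δ := by simpa [Real.dist_eq] using hh
    have := hball hxδ
    calc ‖g' x‖ ≤ c * ‖x ^ n‖ := this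
      _ ≤ c * |h| ^ n := by
          rw [Real.norm_eq_abs, abs_pow]
          exact mul_le_mul_of_nonneg_left (pow_le_pow_left₀ (abs_nonneg x) hxh n) hc.le
  have hmvt := Convex.norm_image_sub_le_of_norm_hasDerivWithin_le
    (fun x _ => (hd x).hasDerivWithinAt) key (convex_uIcc 0 h)
    Set.left_mem_uIcc Set.right_mem_uIcc
  rw [h0, sub_zero, sub_zero] at hmvt
  calc ‖g h‖ ≤ c * |h| ^ n * ‖h‖ := hmvt
    _ = c * ‖h ^ (n + 1)‖ := by
        rw [Real.norm_eq_abs, Real.norm_eq_abs, abs_pow, pow_succ]; ring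

set_option maxHeartbeats 1600000 in
theorem ddim_score_coefficient_third_order
    (β ν : ℝ → ℝ)
    (hβ : ContDiff ℝ 2 β)
    (hν01 : ∀ t, 0 < ν t ∧ ν t < 1)
    (hν : ∀ t, HasDerivAt ν ((1 - ν t) * β t) t)
    (t : ℝ) :
    (fun h : ℝ =>
        Real.sqrt (ν t) *
            (Real.sqrt ((1 - ν t) * ν (t - h)) - Real.sqrt ((1 - ν (t - h)) * ν t))
            / Real.sqrt (1 - ν t)
          - (-(β t * h / 2)
              + (h ^ 2 / 4) * (deriv β t - β t ^ 2 / (2 * ν t))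
              + (h ^ 3 / 4) * (β t ^ 3 * (-(ν t ^ 2) + 3 * ν t - 3) / (12 * ν t ^ 2)
                  + β t * deriv β t / (2 * ν t) - deriv (deriv β) t / 3)))
      =o[𝓝 0] fun h : ℝ => h ^ 3 := by
  obtain ⟨C2, hC2⟩ : ∃ c : ℝ, c = deriv β t - β t ^ 2 / (2 * ν t) := ⟨_, rfl⟩
  obtain ⟨C3, hC3⟩ : ∃ c : ℝ, c = β t ^ 3 * (-(ν t ^ 2) + 3 * ν t - 3) / (12 * ν t ^ 2)
      + β t * deriv β t / (2 * ν t) - deriv (deriv β) t / 3 := ⟨_, rfl⟩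
  rw [← hC2, ← hC3]
  obtain ⟨ha0, ha1⟩ := hν01 t
  have ha1' : (0:ℝ) < 1 - ν t := by linarith
  have hqpt : (0:ℝ) < Real.sqrt (ν t) := Real.sqrt_pos.mpr ha0
  have hrpt : (0:ℝ) < Real.sqrt (1 - ν t) := Real.sqrt_pos.mpr ha1'
  have hq2t : Real.sqrt (ν t) ^ 2 = ν t := Real.sq_sqrt ha0.le
  have hr2t : Real.sqrt (1 - ν t) ^ 2 = 1 - ν t := Real.sq_sqrt ha1'.le
  have hq3t : Real.sqrt (ν t) ^ 3 = ν t * Real.sqrt (ν t) := by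
    rw [pow_succ, hq2t]
  have hq5t : Real.sqrt (ν t) ^ 5 = ν t ^ 2 * Real.sqrt (ν t) := by
    rw [show (5:ℕ) = 2*2+1 from rfl, pow_succ, pow_mul, hq2t]
  have hr4t : Real.sqrt (1 - ν t) ^ 4 = (1 - ν t) ^ 2 := by
    rw [show (4:ℕ) = 2*2 from rfl, pow_mul, hr2t]
  have hr6t : Real.sqrt (1 - ν t) ^ 6 = (1 - ν t) ^ 3 := by
    rw [show (6:ℕ) = 2*3 from rfl, pow_mul, hr2t]
  -- regularity of β
  have hβd : Differentiable ℝ β := hβ.differentiable two_ne_zero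
  have hβ' : ContDiff ℝ 1 (deriv β) := by
    have h2 : ContDiff ℝ (1 + 1) β := by norm_num; exact hβ
    exact (contDiff_succ_iff_deriv.mp h2).2.2
  have hβd1 : Differentiable ℝ (deriv β) := hβ'.differentiable one_ne_zero
  have hβc2 : Continuous (deriv (deriv β)) := (contDiff_one_iff_deriv.mp hβ').2
  -- basic positivity facts
  have hw0 : ∀ x : ℝ, 0 < ν (t - x) := fun x => (hν01 _).1
  have hw1 : ∀ x : ℝ, ν (t - x) < 1 := fun x => (hν01 _).2
  have hqpos : ∀ x : ℝ, 0 < Real.sqrt (ν (t - x)) := fun x => Real.sqrt_pos.mpr (hw0 x)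
  have hrpos : ∀ x : ℝ, 0 < Real.sqrt (1 - ν (t - x)) := fun x =>
    Real.sqrt_pos.mpr (by linarith [hw1 x])
  -- derivative atoms
  have hneg : ∀ x : ℝ, HasDerivAt (fun h : ℝ => t - h) (-1) x := fun x =>
    (hasDerivAt_id x).const_sub t
  have hw : ∀ x : ℝ, HasDerivAt (fun h : ℝ => ν (t - h)) (-((1 - ν (t - x)) * β (t - x))) x := by
    intro x
    have := (hν (t - x)).comp x (hneg x)
    exact this.congr_deriv (by ring)
  have hw1' : ∀ x : ℝ, HasDerivAt (fun h : ℝ => 1 - ν (t - h)) ((1 - ν (t - x)) * β (t - x)) x := by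
    intro x
    have := (hw x).const_sub 1
    exact this.congr_deriv (by ring)
  have hq : ∀ x : ℝ, HasDerivAt (fun h : ℝ => Real.sqrt (ν (t - h)))
      (-((1 - ν (t - x)) * β (t - x)) / (2 * Real.sqrt (ν (t - x)))) x := fun x =>
    (hw x).sqrt (hw0 x).ne'
  have hr : ∀ x : ℝ, HasDerivAt (fun h : ℝ => Real.sqrt (1 - ν (t - h)))
      ((1 - ν (t - x)) * β (t - x) / (2 * Real.sqrt (1 - ν (t - x)))) x := fun x =>
    (hw1' x).sqrt (by have := hw1 x; intro hcon; nlinarith)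
  have hb : ∀ x : ℝ, HasDerivAt (fun h : ℝ => β (t - h)) (-(deriv β (t - x))) x := by
    intro x
    have := ((hβd (t - x)).hasDerivAt).comp x (hneg x)
    exact this.congr_deriv (by ring)
  have hb1 : ∀ x : ℝ, HasDerivAt (fun h : ℝ => deriv β (t - h)) (-(deriv (deriv β) (t - x))) x := by
    intro x
    have := ((hβd1 (t - x)).hasDerivAt).comp x (hneg x)
    exact this.congr_deriv (by ring)
  -- continuity atoms
  have hνc : Continuous ν := Differentiable.continuous (fun x => (hν x).differentiableAt)
  have hwc : Continuous (fun h : ℝ => ν (t - h)) := hνc.comp (continuous_const.sub continuous_id)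
  have hQc : Continuous (fun h : ℝ => Real.sqrt (ν (t - h))) := Real.continuous_sqrt.comp hwc
  have hRc : Continuous (fun h : ℝ => Real.sqrt (1 - ν (t - h))) :=
    Real.continuous_sqrt.comp (continuous_const.sub hwc)
  have hBc : Continuous (fun h : ℝ => β (t - h)) :=
    hβ.continuous.comp (continuous_const.sub continuous_id)
  have hB1c : Continuous (fun h : ℝ => deriv β (t - h)) :=
    hβ'.continuous.comp (continuous_const.sub continuous_id)
  have hB2c : Continuous (fun h : ℝ => deriv (deriv β) (t - h)) :=
    hβc2.comp (continuous_const.sub continuous_id)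
  -- reduce the goal function to a nicer form
  have hfe : (fun h : ℝ =>
        Real.sqrt (ν t) *
            (Real.sqrt ((1 - ν t) * ν (t - h)) - Real.sqrt ((1 - ν (t - h)) * ν t))
            / Real.sqrt (1 - ν t)
          - (-(β t * h / 2) + (h ^ 2 / 4) * C2 + (h ^ 3 / 4) * C3))
      = (fun h : ℝ =>
        Real.sqrt (ν t) * Real.sqrt (ν (t - h))
          - ν t / Real.sqrt (1 - ν t) * Real.sqrt (1 - ν (t - h))
          - (-(β t * h / 2) + h ^ 2 / 4 * C2 + h ^ 3 / 4 * C3)) := by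
    funext h
    rw [Real.sqrt_mul ha1'.le, Real.sqrt_mul (by linarith [hw1 h] : (0:ℝ) ≤ 1 - ν (t - h))]
    field_simp
    linear_combination (-8 * Real.sqrt (1 - ν (t - h))) * hq2t
  -- first derivative
  have hd0 : ∀ x : ℝ, HasDerivAt (fun h : ℝ =>
        Real.sqrt (ν t) * Real.sqrt (ν (t - h))
          - ν t / Real.sqrt (1 - ν t) * Real.sqrt (1 - ν (t - h))
          - (-(β t * h / 2) + h ^ 2 / 4 * C2 + h ^ 3 / 4 * C3))
      (-(Real.sqrt (ν t) * Real.sqrt (1 - ν (t - x)) ^ 2 * β (t - x)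
            / (2 * Real.sqrt (ν (t - x))))
        - ν t / Real.sqrt (1 - ν t) * (Real.sqrt (1 - ν (t - x)) * β (t - x) / 2)
        - (-(β t / 2) + x * C2 / 2 + 3 * x ^ 2 / 4 * C3)) x := by
    intro x
    have h1 := (hq x).const_mul (Real.sqrt (ν t))
    have h2 := (hr x).const_mul (ν t / Real.sqrt (1 - ν t))
    have hP := ((((hasDerivAt_id x).const_mul (β t)).div_const 2).neg.add
        (((hasDerivAt_pow 2 x).div_const 4).mul_const C2)).add
        (((hasDerivAt_pow 3 x).div_const 4).mul_const C3)
    have H := (h1.sub h2).sub hP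
    refine H.congr_deriv ?_
    have hqp := hqpos x; have hrp := hrpos x
    have hw1x := hw1 x
    set w := ν (t - x) with hwdef
    set b := β (t - x) with hbdef
    set q := Real.sqrt w with hqdef
    set r := Real.sqrt (1 - w) with hrdef
    have hr2 : r ^ 2 = 1 - w := Real.sq_sqrt (by linarith)
    rw [← hr2]
    push_cast
    field_simp [hqp.ne', hrp.ne', hrpt.ne']
    ring
  -- second derivative
  have hd1 : ∀ x : ℝ, HasDerivAt (fun h : ℝ =>
      -(Real.sqrt (ν t) * Real.sqrt (1 - ν (t - h)) ^ 2 * β (t - h)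
            / (2 * Real.sqrt (ν (t - h))))
        - ν t / Real.sqrt (1 - ν t) * (Real.sqrt (1 - ν (t - h)) * β (t - h) / 2)
        - (-(β t / 2) + h * C2 / 2 + 3 * h ^ 2 / 4 * C3))
      (-(Real.sqrt (ν t) / 2) * (Real.sqrt (1 - ν (t - x)) ^ 2
            * (β (t - x) ^ 2 - deriv β (t - x)) / Real.sqrt (ν (t - x))
          + Real.sqrt (1 - ν (t - x)) ^ 4 * β (t - x) ^ 2
            / (2 * Real.sqrt (ν (t - x)) ^ 3))
        - ν t / (2 * Real.sqrt (1 - ν t)) * (Real.sqrt (1 - ν (t - x)) * β (t - x) ^ 2 / 2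
            - Real.sqrt (1 - ν (t - x)) * deriv β (t - x))
        - (C2 / 2 + 3 * x / 2 * C3)) x := by
    clear hfe hd0
    intro x
    have hqp := hqpos x; have hrp := hrpos x
    have hnum := (((hr x).pow 2).const_mul (Real.sqrt (ν t))).mul (hb x)
    have hden := (hq x).const_mul 2
    have hT1 := hnum.div hden (by positivity)
    have hT2 := (((hr x).mul (hb x)).div_const 2).const_mul (ν t / Real.sqrt (1 - ν t))
    have hP1 := ((hasDerivAt_const x (-(β t / 2))).add
        (((hasDerivAt_id x).mul_const C2).div_const 2)).add
        ((((hasDerivAt_pow 2 x).const_mul 3).div_const 4).mul_const C3)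
    have H := (hT1.neg.sub hT2).sub hP1
    refine H.congr_deriv ?_
    simp only [Pi.pow_apply, Pi.mul_apply, Pi.sub_apply, Pi.add_apply]
    have hw1x := hw1 x
    set w := ν (t - x) with hwdef
    set b := β (t - x) with hbdef
    set m := deriv β (t - x) with hmdef
    set q := Real.sqrt w with hqdef
    set r := Real.sqrt (1 - w) with hrdef
    have hr2 : r ^ 2 = 1 - w := Real.sq_sqrt (by linarith)
    rw [← hr2]
    push_cast
    field_simp [hqp.ne', hrp.ne', hrpt.ne']
    ring
  -- third derivative
  have hd2 : ∀ x : ℝ, HasDerivAt (fun h : ℝ =>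
      -(Real.sqrt (ν t) / 2) * (Real.sqrt (1 - ν (t - h)) ^ 2
            * (β (t - h) ^ 2 - deriv β (t - h)) / Real.sqrt (ν (t - h))
          + Real.sqrt (1 - ν (t - h)) ^ 4 * β (t - h) ^ 2
            / (2 * Real.sqrt (ν (t - h)) ^ 3))
        - ν t / (2 * Real.sqrt (1 - ν t)) * (Real.sqrt (1 - ν (t - h)) * β (t - h) ^ 2 / 2
            - Real.sqrt (1 - ν (t - h)) * deriv β (t - h))
        - (C2 / 2 + 3 * h / 2 * C3))
      (-(Real.sqrt (ν t) / 2) * (Real.sqrt (1 - ν (t - x)) ^ 2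
            * (β (t - x) ^ 3 - 3 * β (t - x) * deriv β (t - x) + deriv (deriv β) (t - x))
            / Real.sqrt (ν (t - x))
          + 3 / 2 * Real.sqrt (1 - ν (t - x)) ^ 4 * β (t - x)
            * (β (t - x) ^ 2 - deriv β (t - x)) / Real.sqrt (ν (t - x)) ^ 3
          + 3 / 4 * Real.sqrt (1 - ν (t - x)) ^ 6 * β (t - x) ^ 3
            / Real.sqrt (ν (t - x)) ^ 5)
        - ν t * Real.sqrt (1 - ν (t - x)) / (2 * Real.sqrt (1 - ν t))
            * (β (t - x) ^ 3 / 4 - 3 / 2 * (β (t - x) * deriv β (t - x))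
              + deriv (deriv β) (t - x))
        - 3 / 2 * C3) x := by
    clear hfe hd0 hd1
    intro x
    have hqp := hqpos x; have hrp := hrpos x
    have hA1 := (((hr x).pow 2).mul (((hb x).pow 2).sub (hb1 x))).div (hq x) hqp.ne'
    have hA2 := (((hr x).pow 4).mul ((hb x).pow 2)).div
      (((hq x).pow 3).const_mul 2) (mul_ne_zero two_ne_zero (pow_ne_zero _ hqp.ne'))
    have hT1 := (hA1.add hA2).const_mul (-(Real.sqrt (ν t) / 2))
    have hT2 := ((((hr x).mul ((hb x).pow 2)).div_const 2).sub
      ((hr x).mul (hb1 x))).const_mul (ν t / (2 * Real.sqrt (1 - ν t)))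
    have hP2 := (hasDerivAt_const x (C2 / 2)).add
      ((((hasDerivAt_id x).const_mul 3).div_const 2).mul_const C3)
    have H := (hT1.sub hT2).sub hP2
    refine H.congr_deriv ?_
    simp only [Pi.pow_apply, Pi.mul_apply, Pi.sub_apply, Pi.add_apply]
    have hw1x := hw1 x
    set w := ν (t - x) with hwdef
    set b := β (t - x) with hbdef
    set m := deriv β (t - x) with hmdef
    set n := deriv (deriv β) (t - x) with hndef
    set q := Real.sqrt w with hqdef
    set r := Real.sqrt (1 - w) with hrdef
    have hr2 : r ^ 2 = 1 - w := Real.sq_sqrt (by linarith)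
    rw [← hr2]
    push_cast
    field_simp [hqp.ne', hrp.ne', hrpt.ne']
    ring
  -- values at 0
  have e0 : Real.sqrt (ν t) * Real.sqrt (ν (t - 0))
      - ν t / Real.sqrt (1 - ν t) * Real.sqrt (1 - ν (t - 0))
      - (-(β t * 0 / 2) + 0 ^ 2 / 4 * C2 + 0 ^ 3 / 4 * C3) = 0 := by
    simp only [sub_zero]
    field_simp
    rw [hq2t]; ring
  have e1 : -(Real.sqrt (ν t) * Real.sqrt (1 - ν (t - 0)) ^ 2 * β (t - 0)
        / (2 * Real.sqrt (ν (t - 0))))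
      - ν t / Real.sqrt (1 - ν t) * (Real.sqrt (1 - ν (t - 0)) * β (t - 0) / 2)
      - (-(β t / 2) + 0 * C2 / 2 + 3 * 0 ^ 2 / 4 * C3) = 0 := by
    simp only [sub_zero]
    rw [hr2t]
    field_simp
    ring
  have e2 : -(Real.sqrt (ν t) / 2) * (Real.sqrt (1 - ν (t - 0)) ^ 2
        * (β (t - 0) ^ 2 - deriv β (t - 0)) / Real.sqrt (ν (t - 0))
        + Real.sqrt (1 - ν (t - 0)) ^ 4 * β (t - 0) ^ 2
          / (2 * Real.sqrt (ν (t - 0)) ^ 3))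
      - ν t / (2 * Real.sqrt (1 - ν t)) * (Real.sqrt (1 - ν (t - 0)) * β (t - 0) ^ 2 / 2
          - Real.sqrt (1 - ν (t - 0)) * deriv β (t - 0))
      - (C2 / 2 + 3 * 0 / 2 * C3) = 0 := by
    simp only [sub_zero]
    rw [hr2t, hr4t, hq3t, hC2]
    field_simp
    ring
  have e3 : -(Real.sqrt (ν t) / 2) * (Real.sqrt (1 - ν (t - 0)) ^ 2
        * (β (t - 0) ^ 3 - 3 * β (t - 0) * deriv β (t - 0) + deriv (deriv β) (t - 0))
        / Real.sqrt (ν (t - 0))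
        + 3 / 2 * Real.sqrt (1 - ν (t - 0)) ^ 4 * β (t - 0)
          * (β (t - 0) ^ 2 - deriv β (t - 0)) / Real.sqrt (ν (t - 0)) ^ 3
        + 3 / 4 * Real.sqrt (1 - ν (t - 0)) ^ 6 * β (t - 0) ^ 3
          / Real.sqrt (ν (t - 0)) ^ 5)
      - ν t * Real.sqrt (1 - ν (t - 0)) / (2 * Real.sqrt (1 - ν t))
          * (β (t - 0) ^ 3 / 4 - 3 / 2 * (β (t - 0) * deriv β (t - 0))
            + deriv (deriv β) (t - 0))
      - 3 / 2 * C3 = 0 := by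
    simp only [sub_zero]
    rw [hr2t, hr4t, hr6t, hq3t, hq5t, hC3]
    field_simp
    ring
  -- continuity of the third derivative
  have hg3c : Continuous (fun x : ℝ =>
      -(Real.sqrt (ν t) / 2) * (Real.sqrt (1 - ν (t - x)) ^ 2
            * (β (t - x) ^ 3 - 3 * β (t - x) * deriv β (t - x) + deriv (deriv β) (t - x))
            / Real.sqrt (ν (t - x))
          + 3 / 2 * Real.sqrt (1 - ν (t - x)) ^ 4 * β (t - x)
            * (β (t - x) ^ 2 - deriv β (t - x)) / Real.sqrt (ν (t - x)) ^ 3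
          + 3 / 4 * Real.sqrt (1 - ν (t - x)) ^ 6 * β (t - x) ^ 3
            / Real.sqrt (ν (t - x)) ^ 5)
        - ν t * Real.sqrt (1 - ν (t - x)) / (2 * Real.sqrt (1 - ν t))
            * (β (t - x) ^ 3 / 4 - 3 / 2 * (β (t - x) * deriv β (t - x))
              + deriv (deriv β) (t - x))
        - 3 / 2 * C3) := by
    have hT1 : Continuous (fun x : ℝ => Real.sqrt (1 - ν (t - x)) ^ 2
        * (β (t - x) ^ 3 - 3 * β (t - x) * deriv β (t - x) + deriv (deriv β) (t - x))
        / Real.sqrt (ν (t - x))) :=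
      ((hRc.pow 2).mul (((hBc.pow 3).sub ((continuous_const.mul hBc).mul hB1c)).add
        hB2c)).div hQc (fun x => (hqpos x).ne')
    have hT2 : Continuous (fun x : ℝ => 3 / 2 * Real.sqrt (1 - ν (t - x)) ^ 4 * β (t - x)
        * (β (t - x) ^ 2 - deriv β (t - x)) / Real.sqrt (ν (t - x)) ^ 3) :=
      (((continuous_const.mul (hRc.pow 4)).mul hBc).mul ((hBc.pow 2).sub hB1c)).div
        (hQc.pow 3) (fun x => pow_ne_zero _ (hqpos x).ne')
    have hT3 : Continuous (fun x : ℝ => 3 / 4 * Real.sqrt (1 - ν (t - x)) ^ 6 * β (t - x) ^ 3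
        / Real.sqrt (ν (t - x)) ^ 5) :=
      ((continuous_const.mul (hRc.pow 6)).mul (hBc.pow 3)).div
        (hQc.pow 5) (fun x => pow_ne_zero _ (hqpos x).ne')
    have hU : Continuous (fun x : ℝ => ν t * Real.sqrt (1 - ν (t - x))
        / (2 * Real.sqrt (1 - ν t))
        * (β (t - x) ^ 3 / 4 - 3 / 2 * (β (t - x) * deriv β (t - x))
          + deriv (deriv β) (t - x))) :=
      ((continuous_const.mul hRc).div_const _).mul
        ((((hBc.pow 3).div_const 4).sub (continuous_const.mul (hBc.mul hB1c))).add hB2c)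
    exact ((continuous_const.mul ((hT1.add hT2).add hT3)).sub hU).sub continuous_const
  -- assemble
  have L3 : (fun x : ℝ =>
      -(Real.sqrt (ν t) / 2) * (Real.sqrt (1 - ν (t - x)) ^ 2
            * (β (t - x) ^ 3 - 3 * β (t - x) * deriv β (t - x) + deriv (deriv β) (t - x))
            / Real.sqrt (ν (t - x))
          + 3 / 2 * Real.sqrt (1 - ν (t - x)) ^ 4 * β (t - x)
            * (β (t - x) ^ 2 - deriv β (t - x)) / Real.sqrt (ν (t - x)) ^ 3
          + 3 / 4 * Real.sqrt (1 - ν (t - x)) ^ 6 * β (t - x) ^ 3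
            / Real.sqrt (ν (t - x)) ^ 5)
        - ν t * Real.sqrt (1 - ν (t - x)) / (2 * Real.sqrt (1 - ν t))
            * (β (t - x) ^ 3 / 4 - 3 / 2 * (β (t - x) * deriv β (t - x))
              + deriv (deriv β) (t - x))
        - 3 / 2 * C3) =o[𝓝 (0:ℝ)] fun h : ℝ => h ^ 0 := by
    simp only [pow_zero]
    rw [isLittleO_one_iff]
    have htd := hg3c.tendsto 0
    rwa [e3] at htd
  have L2 := step_littleo e2 hd2 L3
  have L1 := step_littleo e1 hd1 L2
  have L0 := step_littleo e0 hd0 L1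
  rw [hfe]
  convert L0 using 2
end

section
/- Let I ⊆ ℝ be an open interval, β : ℝ → ℝ twice differentiable on I, and ν : ℝ → ℝ differentiable on I with 0 < ν(t) < 1 and ν'(t) = (1 − ν(t))·β(t) for t ∈ I. Fix x₀ ∈ ℝ and define the single-point score S(x,t) = (x − √(1 − ν(t))·x₀)/√(ν(t)), the reverse-SDE drift f♯(x,t) = −(β(t)/2)·x + (β(t)/√(ν(t)))·S(x,t), and the operator (L♯ φ)(x,t) = −∂φ/∂t (x,t) − f♯(x,t)·∂φ/∂x (x,t) + (β(t)/2)·∂²φ/∂x² (x,t). Then for all x ∈ ℝ and t ∈ I, (L♯(L♯(−f♯)))(x,t) = ( β(t)³/8 − 3β(t)β'(t)/4 + β''(t)/2 )·x − ( (β(t)³ + 4β''(t))/(4√(ν(t))) )·S(x,t). -/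
open Real

set_option maxHeartbeats 2000000 in
theorem ideal_derivative_L_sharp_sq_of_drift
    (I : Set ℝ) (hI : IsOpen I)
    (β ν : ℝ → ℝ)
    (hβ : ∀ t ∈ I, DifferentiableAt ℝ β t)
    (hβ' : ∀ t ∈ I, DifferentiableAt ℝ (deriv β) t)
    (hν01 : ∀ t ∈ I, 0 < ν t ∧ ν t < 1)
    (hν : ∀ t ∈ I, HasDerivAt ν ((1 - ν t) * β t) t)
    (x₀ : ℝ)
    (S : ℝ → ℝ → ℝ)
    (hS : S = fun x t => (x - Real.sqrt (1 - ν t) * x₀) / Real.sqrt (ν t))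
    (f : ℝ → ℝ → ℝ)
    (hf : f = fun x t => -(β t / 2) * x + (β t / Real.sqrt (ν t)) * S x t)
    (L : (ℝ → ℝ → ℝ) → ℝ → ℝ → ℝ)
    (hL : L = fun φ x t =>
      -(deriv (fun τ => φ x τ) t) - f x t * deriv (fun ξ => φ ξ t) x
        + (β t / 2) * deriv (deriv (fun ξ => φ ξ t)) x) :
    ∀ x : ℝ, ∀ t ∈ I,
      L (L (fun x t => -f x t)) x t
        = (β t ^ 3 / 8 - 3 * β t * deriv β t / 4 + deriv (deriv β) t / 2) * x
          - ((β t ^ 3 + 4 * deriv (deriv β) t) / (4 * Real.sqrt (ν t))) * S x t := by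
  set a : ℝ → ℝ := fun τ => β τ / ν τ - β τ / 2 with ha
  set b : ℝ → ℝ := fun τ => -(x₀ * Real.sqrt (1 - ν τ) * β τ / ν τ) with hb
  set a1 : ℝ → ℝ := fun τ =>
    deriv β τ / ν τ - β τ * ((1 - ν τ) * β τ) / (ν τ) ^ 2 - deriv β τ / 2 with ha1
  set b1 : ℝ → ℝ := fun τ =>
    -(x₀ * Real.sqrt (1 - ν τ) *
      (deriv β τ / ν τ - β τ ^ 2 / (2 * ν τ) - β τ ^ 2 * (1 - ν τ) / (ν τ) ^ 2)) with hb1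
  set P : ℝ → ℝ := fun τ => deriv β τ / ν τ - deriv β τ / 2 + β τ ^ 2 / 4 with hP
  set Q : ℝ → ℝ := fun τ => -(x₀ * Real.sqrt (1 - ν τ) * deriv β τ / ν τ) with hQ
  have hN0 : ∀ τ ∈ I, (0:ℝ) < ν τ := fun τ hτ => (hν01 τ hτ).1
  have hM0 : ∀ τ ∈ I, (0:ℝ) < 1 - ν τ := fun τ hτ => by linarith [(hν01 τ hτ).2]
  have hNne : ∀ τ ∈ I, ν τ ≠ 0 := fun τ hτ => (hN0 τ hτ).ne'
  have hsq : ∀ τ ∈ I, Real.sqrt (ν τ) * Real.sqrt (ν τ) = ν τ :=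
    fun τ hτ => Real.mul_self_sqrt (hN0 τ hτ).le
  have hsqne : ∀ τ ∈ I, Real.sqrt (ν τ) ≠ 0 :=
    fun τ hτ => (Real.sqrt_pos.mpr (hN0 τ hτ)).ne'
  have hssq : ∀ τ ∈ I, Real.sqrt (1 - ν τ) * Real.sqrt (1 - ν τ) = 1 - ν τ :=
    fun τ hτ => Real.mul_self_sqrt (hM0 τ hτ).le
  have hssqne : ∀ τ ∈ I, Real.sqrt (1 - ν τ) ≠ 0 :=
    fun τ hτ => (Real.sqrt_pos.mpr (hM0 τ hτ)).ne'
  -- f is affine in x on I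
  have hfab : ∀ (ξ τ : ℝ), τ ∈ I → f ξ τ = a τ * ξ + b τ := by
    intro ξ τ hτ
    rw [hf, hS]
    simp only []
    have key : β τ / Real.sqrt (ν τ) * ((ξ - Real.sqrt (1 - ν τ) * x₀) / Real.sqrt (ν τ))
        = β τ * (ξ - Real.sqrt (1 - ν τ) * x₀) / ν τ := by
      rw [div_mul_div_comm, hsq τ hτ]
    rw [key, ha, hb]
    have h3 := hNne τ hτ
    field_simp
    ring
  -- derivative of sqrt (1 - ν)
  have hsd : ∀ τ ∈ I, HasDerivAt (fun u => Real.sqrt (1 - ν u))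
      (-(Real.sqrt (1 - ν τ) * β τ / 2)) τ := by
    intro τ hτ
    have h := ((hasDerivAt_const τ (1:ℝ)).sub (hν τ hτ)).sqrt (hM0 τ hτ).ne'
    refine h.congr_deriv (Eq.symm ?_)
    simp only [Pi.sub_apply, Pi.mul_apply]
    have hs := hssq τ hτ
    have h4 := hssqne τ hτ
    field_simp
    linear_combination -β τ * hs
  -- derivatives of a and b on I
  have had : ∀ τ ∈ I, HasDerivAt a (a1 τ) τ := by
    intro τ hτ
    have h := (((hβ τ hτ).hasDerivAt.div (hν τ hτ) (hNne τ hτ)).sub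
      ((hβ τ hτ).hasDerivAt.div_const 2))
    refine h.congr_deriv (Eq.symm ?_)
    have h3 := hNne τ hτ
    rw [ha1]
    field_simp
  have hbd : ∀ τ ∈ I, HasDerivAt b (b1 τ) τ := by
    intro τ hτ
    have h := ((((hsd τ hτ).const_mul x₀).mul (hβ τ hτ).hasDerivAt).div (hν τ hτ)
      (hNne τ hτ)).neg
    refine h.congr_deriv (Eq.symm ?_)
    simp only [Pi.sub_apply, Pi.mul_apply]
    have h3 := hNne τ hτ
    rw [hb1]
    field_simp
    ring
  -- the inner L applied to -f is affine: P τ * ξ + Q τ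
  have hg : ∀ (ξ τ : ℝ), τ ∈ I → L (fun x t => -f x t) ξ τ = P τ * ξ + Q τ := by
    intro ξ τ hτ
    rw [hL]
    simp only []
    have hx1 : (fun ζ => -f ζ τ) = fun ζ => -(a τ * ζ + b τ) :=
      funext fun ζ => by rw [hfab ζ τ hτ]
    have hdx : ∀ y : ℝ, HasDerivAt (fun ζ : ℝ => -(a τ * ζ + b τ)) (-(a τ * 1)) y :=
      fun y => (((hasDerivAt_id y).const_mul (a τ)).add_const (b τ)).neg
    have hdx1 : deriv (fun ζ : ℝ => -(a τ * ζ + b τ)) = fun _ => -(a τ * 1) :=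
      funext fun y => (hdx y).deriv
    have hD1 : deriv (fun ζ => -f ζ τ) ξ = -(a τ * 1) := by
      rw [hx1]; exact (hdx ξ).deriv
    have hD2 : deriv (deriv (fun ζ => -f ζ τ)) ξ = 0 := by
      rw [hx1, hdx1]; simp
    have ht1 : deriv (fun u => -f ξ u) τ = -(a1 τ * ξ + b1 τ) := by
      have heq : (fun u => -f ξ u) =ᶠ[nhds τ] (fun u => -(a u * ξ + b u)) := by
        filter_upwards [hI.mem_nhds hτ] with u hu
        rw [hfab ξ u hu]
      rw [heq.deriv_eq]
      exact (((had τ hτ).mul_const ξ).add (hbd τ hτ)).neg.deriv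
    rw [ht1, hD1, hD2, hfab ξ τ hτ]
    rw [hP, hQ, ha, hb, ha1, hb1]
    have h3 := hNne τ hτ
    field_simp
    ring
  intro x t ht
  -- derivatives of P and Q at t
  have hPd : HasDerivAt P (deriv (deriv β) t / ν t
      - deriv β t * ((1 - ν t) * β t) / (ν t) ^ 2 - deriv (deriv β) t / 2
      + β t * deriv β t / 2) t := by
    have h := ((((hβ' t ht).hasDerivAt.div (hν t ht) (hNne t ht)).sub
      ((hβ' t ht).hasDerivAt.div_const 2)).add
      (((hβ t ht).hasDerivAt.pow 2).div_const 4))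
    refine h.congr_deriv (Eq.symm ?_)
    have h3 := hNne t ht
    field_simp
    ring
  have hQd : HasDerivAt Q (-(x₀ *
      (-(Real.sqrt (1 - ν t) * β t / 2) * deriv β t
        + Real.sqrt (1 - ν t) * deriv (deriv β) t) / ν t
      - x₀ * Real.sqrt (1 - ν t) * deriv β t * ((1 - ν t) * β t) / (ν t) ^ 2)) t := by
    have h := ((((hsd t ht).const_mul x₀).mul (hβ' t ht).hasDerivAt).div (hν t ht)
      (hNne t ht)).neg
    refine h.congr_deriv (Eq.symm ?_)
    simp only [Pi.sub_apply, Pi.mul_apply]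
    have h3 := hNne t ht
    field_simp
  -- unfold outer L
  have hLapp : ∀ (φ : ℝ → ℝ → ℝ) (y u : ℝ), L φ y u
      = -(deriv (fun τ => φ y τ) u) - f y u * deriv (fun ξ => φ ξ u) y
        + (β u / 2) * deriv (deriv (fun ξ => φ ξ u)) y := by
    intro φ y u; rw [hL]
  rw [hLapp]
  have hx1 : (fun ξ => L (fun x t => -f x t) ξ t) = fun ξ => P t * ξ + Q t :=
    funext fun ξ => hg ξ t ht
  have hdx : ∀ y : ℝ, HasDerivAt (fun ξ : ℝ => P t * ξ + Q t) (P t * 1) y :=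
    fun y => ((hasDerivAt_id y).const_mul (P t)).add_const (Q t)
  have hdx1 : deriv (fun ξ : ℝ => P t * ξ + Q t) = fun _ => P t * 1 :=
    funext fun y => (hdx y).deriv
  have hD1 : deriv (fun ξ => L (fun x t => -f x t) ξ t) x = P t * 1 := by
    rw [hx1]; exact (hdx x).deriv
  have hD2 : deriv (deriv (fun ξ => L (fun x t => -f x t) ξ t)) x = 0 := by
    rw [hx1, hdx1]; simp
  have ht1 : deriv (fun τ => L (fun x t => -f x t) x τ) t
      = (deriv (deriv β) t / ν t
          - deriv β t * ((1 - ν t) * β t) / (ν t) ^ 2 - deriv (deriv β) t / 2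
          + β t * deriv β t / 2) * x
        + (-(x₀ * (-(Real.sqrt (1 - ν t) * β t / 2) * deriv β t
            + Real.sqrt (1 - ν t) * deriv (deriv β) t) / ν t
          - x₀ * Real.sqrt (1 - ν t) * deriv β t * ((1 - ν t) * β t) / (ν t) ^ 2)) := by
    have heq : (fun τ => L (fun x t => -f x t) x τ) =ᶠ[nhds t]
        (fun τ => P τ * x + Q τ) := by
      filter_upwards [hI.mem_nhds ht] with u hu
      exact hg x u hu
    rw [heq.deriv_eq]
    exact ((hPd.mul_const x).add hQd).deriv
  rw [ht1, hD1, hD2, hfab x t ht, hS]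
  simp only []
  rw [hP, ha, hb]
  have h1 := hsq t ht
  have h2 := hsqne t ht
  have h3 := hNne t ht
  have h4 := hssqne t ht
  -- turn the RHS sqrt(ν t) product into ν t
  have key : (β t ^ 3 + 4 * deriv (deriv β) t) / (4 * Real.sqrt (ν t))
      * ((x - Real.sqrt (1 - ν t) * x₀) / Real.sqrt (ν t))
      = (β t ^ 3 + 4 * deriv (deriv β) t) * (x - Real.sqrt (1 - ν t) * x₀) / (4 * ν t) := by
    have h5 : 4 * Real.sqrt (ν t) * Real.sqrt (ν t) = 4 * ν t := by
      rw [mul_assoc, hsq t ht]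
    rw [div_mul_div_comm, h5]
  rw [key]
  field_simp
  ring
end
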